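/- arXiv:1202.4735 — 7 statements merged into one kernel-verified Lean document; each statement's English description precedes it below -/
import Mathlib

section
/- Let ρ ∈ (0, 1/(15π)). There exists N ∈ ℕ such that for every integer n > N, every integer k with k ≠ 0 and k ≠ 2n, every t ∈ [0, ρ], and every λ ∈ ℂ with |λ − (2πn + t)²| ≤ 15πnρ, one has |λ − (2π(n−k) + t)²| > |k|·|2n − k|. -/
set_option maxHeartbeats 1000000


/-- Formula (9) of the paper: for `λ` in the disk `U(n,t,ρ)` around `(2πn+t)²`,
the denominators `λ - (2π(n-k)+t)²` with `k ≠ 0, 2n` are bounded below by `|k|·|2n-k|`. -/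
theorem stmt0 (ρ : ℝ) (hρ₀ : 0 < ρ) (hρ₁ : ρ < 1 / (15 * Real.pi)) :
    ∃ N : ℕ, ∀ n : ℤ, (N : ℤ) < n → ∀ k : ℤ, k ≠ 0 → k ≠ 2 * n →
      ∀ t : ℝ, t ∈ Set.Icc (0 : ℝ) ρ → ∀ lam : ℂ,
        ‖lam - (((2 * Real.pi * (n : ℝ) + t) ^ 2 : ℝ) : ℂ)‖ ≤ 15 * Real.pi * (n : ℝ) * ρ →
        (|k| : ℝ) * (|2 * n - k| : ℝ) <
          ‖lam - (((2 * Real.pi * ((n : ℝ) - (k : ℝ)) + t) ^ 2 : ℝ) : ℂ)‖ := by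
  refine ⟨0, fun n hn k hk0 hk2 t ht lam hlam => ?_⟩
  have hπ : (3:ℝ) < Real.pi := Real.pi_gt_three
  obtain ⟨ht0, htρ⟩ := ht
  have hn1 : (1:ℝ) ≤ (n:ℝ) := by exact_mod_cast hn
  have hρπ : 15 * Real.pi * ρ < 1 := by
    rw [lt_div_iff₀ (by positivity)] at hρ₁
    linarith [mul_comm ρ (15 * Real.pi)]
  set a : ℝ := 2 * Real.pi * (n : ℝ) + t with ha
  set b : ℝ := 2 * Real.pi * ((n : ℝ) - (k : ℝ)) + t with hb
  have hp1 : (1:ℝ) ≤ |(k:ℝ)| := by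
    have h : (1:ℤ) ≤ |k| := Int.one_le_abs hk0
    exact_mod_cast h
  have hq1 : (1:ℝ) ≤ |2 * (n:ℝ) - (k:ℝ)| := by
    have h : (1:ℤ) ≤ |2*n - k| := Int.one_le_abs (by omega)
    have h2 : (1:ℝ) ≤ |((2*n - k : ℤ) : ℝ)| := by exact_mod_cast h
    have h3 : ((2*n - k : ℤ) : ℝ) = 2 * (n:ℝ) - (k:ℝ) := by push_cast; ring
    rwa [h3] at h2
  set P : ℝ := |(k:ℝ)| with hP
  set Q : ℝ := |2 * (n:ℝ) - (k:ℝ)| with hQ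
  -- sum bound
  have hPQ : 2 * (n:ℝ) ≤ P + Q := by
    have h := abs_add_le ((k:ℝ)) (2 * (n:ℝ) - (k:ℝ))
    have he : (k:ℝ) + (2 * (n:ℝ) - (k:ℝ)) = 2 * (n:ℝ) := by ring
    rw [he] at h
    have h2 : |2 * (n:ℝ)| ≤ P + Q := h
    rwa [abs_of_pos (by linarith)] at h2
  -- triangle inequality
  have htri : ‖((a^2:ℝ):ℂ) - ((b^2:ℝ):ℂ)‖ ≤
      ‖lam - ((a^2:ℝ):ℂ)‖ + ‖lam - ((b^2:ℝ):ℂ)‖ := by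
    calc ‖((a^2:ℝ):ℂ) - ((b^2:ℝ):ℂ)‖
        ≤ ‖((a^2:ℝ):ℂ) - lam‖ + ‖lam - ((b^2:ℝ):ℂ)‖ :=
          norm_sub_le_norm_sub_add_norm_sub _ _ _
      _ = _ := by rw [norm_sub_rev]
  have hreal : ‖((a^2:ℝ):ℂ) - ((b^2:ℝ):ℂ)‖ = |a^2 - b^2| := by
    rw [← Complex.ofReal_sub, Complex.norm_real, Real.norm_eq_abs]
  -- factor
  have hfac : |a^2 - b^2| = (2 * Real.pi * P) * |a + b| := by
    have h1 : a^2 - b^2 = (a - b) * (a + b) := by ring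
    rw [h1, abs_mul]
    have h2 : a - b = 2 * Real.pi * (k:ℝ) := by rw [ha, hb]; ring
    rw [h2, abs_mul, abs_of_pos (by positivity : (0:ℝ) < 2 * Real.pi)]
  -- lower bound on |a+b|
  have hab : 2 * Real.pi * Q - 2 * ρ ≤ |a + b| := by
    have he : a + b - 2 * t = 2 * Real.pi * (2 * (n:ℝ) - (k:ℝ)) := by
      rw [ha, hb]; push_cast; ring
    have h3 : 2 * Real.pi * Q = |a + b - 2 * t| := by
      rw [he, abs_mul, abs_of_pos (by positivity : (0:ℝ) < 2 * Real.pi)]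
    have h4 : |a + b - 2 * t| ≤ |a + b| + |2 * t| := abs_sub (a + b) (2 * t)
    have h5 : |2 * t| = 2 * t := abs_of_nonneg (by linarith)
    linarith
  -- combine
  have hbig : (2 * Real.pi * P) * (2 * Real.pi * Q - 2 * ρ) - 15 * Real.pi * (n:ℝ) * ρ ≤
      ‖lam - ((b^2:ℝ):ℂ)‖ := by
    have hm : (2 * Real.pi * P) * (2 * Real.pi * Q - 2 * ρ) ≤ (2 * Real.pi * P) * |a + b| :=
      mul_le_mul_of_nonneg_left hab (by positivity)
    have := htri
    rw [hreal, hfac] at this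
    linarith
  -- final arithmetic
  have hPpos : (0:ℝ) < P := by linarith
  have hQpos : (0:ℝ) < Q := by linarith
  have t1 : 0 ≤ (Real.pi - 3) * (P * Q) :=
    mul_nonneg (by linarith) (by positivity)
  have t2 : 0 ≤ (Real.pi - 3)^2 * (P * Q) :=
    mul_nonneg (sq_nonneg _) (by positivity)
  have h6 : Real.pi * ρ * P ≤ (1/15) * P :=
    mul_le_mul_of_nonneg_right (by linarith) hPpos.le
  have h7 : 15 * Real.pi * (n:ℝ) * ρ < (n:ℝ) := by
    nlinarith [mul_lt_mul_of_pos_left hρπ (show (0:ℝ) < (n:ℝ) by linarith)]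
  have h8 : (n:ℝ) ≤ P * Q := by
    nlinarith [mul_nonneg (sub_nonneg.mpr hp1) (sub_nonneg.mpr hq1)]
  have h9 : P ≤ P * Q := by nlinarith
  have t1' : 0 ≤ Real.pi * (P * Q) - 3 * (P * Q) := by linarith [t1]
  have t2' : 0 ≤ Real.pi^2 * (P * Q) - 6 * (Real.pi * (P * Q)) + 9 * (P * Q) := by nlinarith [t2]
  have hkey : P * Q < (2 * Real.pi * P) * (2 * Real.pi * Q - 2 * ρ) - 15 * Real.pi * (n:ℝ) * ρ := by
    nlinarith [t1', t2', h6, h7, h8, h9]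
  exact lt_of_lt_of_le hkey hbig
end

section
/- For every M > 0 there exist K > 0 and N ∈ ℕ such that for all integers n > N, all t ∈ [0, n^{−2}], and all λ ∈ ℂ with |λ − (2πn)²| ≤ M/n, one has |(λ − (2π(n−1) + t)²)^{−1} + (λ − (2π(n+1) + t)²)^{−1}| ≤ K/n². -/
set_option maxHeartbeats 1000000


/-- The cancellation estimate behind formula (53): for `λ` near `(2πn)²` and
`t ∈ [0, n⁻²]`, the two first-order resolvent terms nearly cancel, giving `O(n⁻²)`. -/
theorem stmt3 (M : ℝ) (hM : 0 < M) :
    ∃ K : ℝ, 0 < K ∧ ∃ N : ℕ, ∀ n : ℕ, N < n →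
      ∀ t : ℝ, t ∈ Set.Icc (0 : ℝ) (((n : ℝ) ^ 2)⁻¹) →
      ∀ lam : ℂ, ‖lam - (((2 * Real.pi * (n : ℝ)) ^ 2 : ℝ) : ℂ)‖ ≤ M / n →
        ‖(lam - (((2 * Real.pi * ((n : ℝ) - 1) + t) ^ 2 : ℝ) : ℂ))⁻¹ +
              (lam - (((2 * Real.pi * ((n : ℝ) + 1) + t) ^ 2 : ℝ) : ℂ))⁻¹‖ ≤
          K / (n : ℝ) ^ 2 := by
  refine ⟨1, one_pos, ⌈M⌉₊ + 1, ?_⟩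
  intro n hn t ht lam hlam
  obtain ⟨ht0, ht1⟩ := ht
  have hπ : (3:ℝ) < Real.pi := Real.pi_gt_three
  have hπ' : Real.pi < 3.15 := by
    have := Real.pi_lt_d2
    linarith
  have hn1 : (1:ℝ) ≤ (n:ℝ) := by
    have : 1 ≤ n := by omega
    exact_mod_cast this
  have hn2 : (0:ℝ) < (n:ℝ)^2 := by positivity
  have hMn : M < (n:ℝ) := by
    have h1 : (⌈M⌉₊ : ℝ) < (n:ℝ) := by exact_mod_cast (by omega : ⌈M⌉₊ < n)
    exact lt_of_le_of_lt (Nat.le_ceil M) h1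
  -- t bounds
  have ht1' : t * (n:ℝ)^2 ≤ 1 := by
    calc t * (n:ℝ)^2 ≤ ((n:ℝ)^2)⁻¹ * (n:ℝ)^2 := by nlinarith
    _ = 1 := inv_mul_cancel₀ (ne_of_gt hn2)
  have htn : t ≤ 1 := by nlinarith
  have htn' : t * (n:ℝ) ≤ 1 := by nlinarith
  set μ : ℝ := (2 * Real.pi * (n : ℝ)) ^ 2 with hμ
  set A : ℝ := (2 * Real.pi * ((n : ℝ) - 1) + t) ^ 2 with hA
  set B : ℝ := (2 * Real.pi * ((n : ℝ) + 1) + t) ^ 2 with hB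
  set x : ℂ := lam - (A : ℂ) with hx
  set y : ℂ := lam - (B : ℂ) with hy
  -- lower bounds for the real gaps
  have f1 : (5:ℝ) ≤ 2 * Real.pi - t := by linarith
  have f2 : (6:ℝ) * (n:ℝ) ≤ 2 * Real.pi * (2 * (n:ℝ) - 1) + t := by nlinarith
  have hgapA : 30 * (n:ℝ) ≤ μ - A := by
    have h : (5:ℝ) * (6 * (n:ℝ)) ≤ (2 * Real.pi - t) * (2 * Real.pi * (2 * (n:ℝ) - 1) + t) :=
      mul_le_mul f1 f2 (by positivity) (by linarith)
    have eq : μ - A = (2 * Real.pi - t) * (2 * Real.pi * (2 * (n:ℝ) - 1) + t) := by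
      rw [hμ, hA]; ring
    rw [eq]; nlinarith [h]
  have g1 : (6:ℝ) ≤ 2 * Real.pi + t := by linarith
  have g2 : (6:ℝ) * (n:ℝ) ≤ 2 * Real.pi * (2 * (n:ℝ) + 1) + t := by nlinarith
  have hgapB : 30 * (n:ℝ) ≤ B - μ := by
    have h : (6:ℝ) * (6 * (n:ℝ)) ≤ (2 * Real.pi + t) * (2 * Real.pi * (2 * (n:ℝ) + 1) + t) :=
      mul_le_mul g1 g2 (by positivity) (by linarith)
    have eq : B - μ = (2 * Real.pi + t) * (2 * Real.pi * (2 * (n:ℝ) + 1) + t) := by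
      rw [hμ, hB]; ring
    rw [eq]; nlinarith [h]
  have hnn : (n:ℝ) ≤ (n:ℝ) * (n:ℝ) := by nlinarith [hn1]
  have hMn' : M / (n:ℝ) ≤ 15 * (n:ℝ) := by
    rw [div_le_iff₀ (by linarith)]
    nlinarith [hMn, hnn]
  have hMn1 : M / (n:ℝ) ≤ 1 := by
    rw [div_le_one (by linarith)]
    linarith
  -- lower bound on |x|
  have hxlb : 15 * (n:ℝ) ≤ ‖x‖ := by
    have e1 : ((μ - A : ℝ) : ℂ) = x - (lam - (μ : ℂ)) := by
      rw [hx]; push_cast; ring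
    have e2 : ‖((μ - A : ℝ) : ℂ)‖ ≤ ‖x‖ + ‖lam - (μ : ℂ)‖ := by
      rw [e1, sub_eq_add_neg]
      exact (norm_add_le x (-(lam - (μ : ℂ)))).trans_eq (by rw [norm_neg])
    rw [Complex.norm_real, Real.norm_eq_abs, abs_of_nonneg (by linarith)] at e2
    linarith
  have hylb : 15 * (n:ℝ) ≤ ‖y‖ := by
    have e1 : ((B - μ : ℝ) : ℂ) = -(y - (lam - (μ : ℂ))) := by
      rw [hy]; push_cast; ring
    have e2 : ‖((B - μ : ℝ) : ℂ)‖ ≤ ‖y‖ + ‖lam - (μ : ℂ)‖ := by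
      rw [e1, norm_neg, sub_eq_add_neg]
      exact (norm_add_le y (-(lam - (μ : ℂ)))).trans_eq (by rw [norm_neg])
    rw [Complex.norm_real, Real.norm_eq_abs, abs_of_nonneg (by linarith)] at e2
    linarith
  -- numerator bound
  have hreal : |2 * μ - A - B| ≤ 110 := by
    rw [abs_le]
    constructor
    · rw [hμ, hA, hB]; nlinarith [sq_nonneg t, sq_nonneg Real.pi]
    · rw [hμ, hA, hB]; nlinarith [sq_nonneg t, sq_nonneg Real.pi, mul_nonneg ht0 ht0]
  have hnum : ‖x + y‖ ≤ 112 := by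
    have e1 : x + y = 2 * (lam - (μ : ℂ)) + ((2 * μ - A - B : ℝ) : ℂ) := by
      rw [hx, hy]; push_cast; ring
    calc ‖x + y‖
        ≤ ‖2 * (lam - (μ : ℂ))‖ + ‖((2 * μ - A - B : ℝ) : ℂ)‖ := by
          rw [e1]; exact norm_add_le _ _
      _ ≤ 2 * (M / n) + 110 := by
          rw [norm_mul, Complex.norm_real, Real.norm_eq_abs]
          have : ‖(2 : ℂ)‖ = 2 := by norm_num
          rw [this]
          have h2 : ‖lam - (μ : ℂ)‖ ≤ M / n := hlam
          nlinarith [hreal]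
      _ ≤ 112 := by linarith
  have hxne : x ≠ 0 := by
    intro h
    rw [h, norm_zero] at hxlb
    linarith
  have hyne : y ≠ 0 := by
    intro h
    rw [h, norm_zero] at hylb
    linarith
  have hsum : x⁻¹ + y⁻¹ = (x + y) / (x * y) := by
    field_simp
    ring
  rw [hsum, norm_div, norm_mul]
  have hden : 225 * (n:ℝ)^2 ≤ ‖x‖ * ‖y‖ := by
    have := mul_le_mul hxlb hylb (by positivity) (by positivity)
    nlinarith [this]
  have hdenpos : (0:ℝ) < ‖x‖ * ‖y‖ := by nlinarith
  calc ‖x + y‖ / (‖x‖ * ‖y‖)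
      ≤ 112 / (225 * (n:ℝ)^2) := by
        apply div_le_div₀ (by positivity) hnum (by positivity) hden
    _ ≤ 1 / (n:ℝ)^2 := by
        rw [div_le_div_iff₀ (by positivity) (by positivity)]
        nlinarith
end

section
/- Let a, b ∈ ℂ, let ρ ∈ (0, 1/(15π)), and use the admissible-sequence definitions of a_k(λ,t) and a′_k(λ,t) for the Mathieu potential. There exists N ∈ ℕ such that for all integers n > N, all integers m ≥ 1, all t ∈ [0, ρ], and all λ ∈ U(n,t,ρ): a_{2m}(λ,t) = 0 and a′_{2m}(λ,t) = 0, while |a_{2m−1}(λ,t)| ≤ (4|ab|)^m·(2n−1)^{−(2m−1)} and |a′_{2m−1}(λ,t)| ≤ (4|ab|)^m·(2n−1)^{−(2m−1)}. -/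
open Finset

namespace Mathieu

/-- `±1` value attached to a boolean index. -/
def sgn (x : Bool) : ℤ := if x then 1 else -1

/-- Partial sum `n₁ + ⋯ + n_s` of the `±1` sequence encoded by `v`. -/
def psum {k : ℕ} (v : Fin k → Bool) (s : ℕ) : ℤ :=
  ∑ i ∈ Finset.univ.filter (fun i : Fin k => (i : ℕ) < s), sgn (v i)

/-- `n`-admissible sequences: all partial sums avoid `0` and `2n`. -/
def Admissible (n k : ℕ) (v : Fin k → Bool) : Prop :=
  ∀ s : Fin k, psum v ((s : ℕ) + 1) ≠ 0 ∧ psum v ((s : ℕ) + 1) ≠ 2 * (n : ℤ)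

/-- `n`-coadmissible sequences: all partial sums avoid `0` and `-2n`. -/
def Coadmissible (n k : ℕ) (v : Fin k → Bool) : Prop :=
  ∀ s : Fin k, psum v ((s : ℕ) + 1) ≠ 0 ∧ psum v ((s : ℕ) + 1) ≠ -(2 * (n : ℤ))

instance (n k : ℕ) : DecidablePred (Admissible n k) := fun v => by
  unfold Admissible; infer_instance

instance (n k : ℕ) : DecidablePred (Coadmissible n k) := fun v => by
  unfold Coadmissible; infer_instance

/-- Fourier coefficients of the Mathieu potential: `q₋₁ = a`, `q₁ = b`, else `0`. -/
noncomputable def qc (a b : ℂ) (m : ℤ) : ℂ :=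
  if m = -1 then a else if m = 1 then b else 0

/-- Resolvent factor `(λ - (2π(n - j) + t)²)⁻¹`. -/
noncomputable def denom (n : ℕ) (lam : ℂ) (t : ℝ) (j : ℤ) : ℂ :=
  (lam - (((2 * Real.pi * ((n : ℝ) - (j : ℝ)) + t) ^ 2 : ℝ) : ℂ))⁻¹

/-- Resolvent factor `(λ - (2π(n + j) - t)²)⁻¹`. -/
noncomputable def denom' (n : ℕ) (lam : ℂ) (t : ℝ) (j : ℤ) : ℂ :=
  (lam - (((2 * Real.pi * ((n : ℝ) + (j : ℝ)) - t) ^ 2 : ℝ) : ℂ))⁻¹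

/-- The term `a_k(λ,t)` of the perturbation series (formula (13)). -/
noncomputable def ak (a b : ℂ) (n k : ℕ) (lam : ℂ) (t : ℝ) : ℂ :=
  ∑ v ∈ Finset.univ.filter (Admissible n k),
    qc a b (-(psum v k)) *
      ∏ i : Fin k, (qc a b (sgn (v i)) * denom n lam t (psum v ((i : ℕ) + 1)))

/-- The term `b_k(λ,t)` of the perturbation series (formula (14)). -/
noncomputable def bk (a b : ℂ) (n k : ℕ) (lam : ℂ) (t : ℝ) : ℂ :=
  ∑ v ∈ Finset.univ.filter (Admissible n k),
    qc a b (2 * (n : ℤ) - psum v k) *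
      ∏ i : Fin k, (qc a b (sgn (v i)) * denom n lam t (psum v ((i : ℕ) + 1)))

/-- The term `a′_k(λ,t)` of the perturbation series (formula (17)). -/
noncomputable def ak' (a b : ℂ) (n k : ℕ) (lam : ℂ) (t : ℝ) : ℂ :=
  ∑ v ∈ Finset.univ.filter (Coadmissible n k),
    qc a b (-(psum v k)) *
      ∏ i : Fin k, (qc a b (sgn (v i)) * denom' n lam t (psum v ((i : ℕ) + 1)))

/-- The term `b′_k(λ,t)` of the perturbation series (formula (18)). -/
noncomputable def bk' (a b : ℂ) (n k : ℕ) (lam : ℂ) (t : ℝ) : ℂ :=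
  ∑ v ∈ Finset.univ.filter (Coadmissible n k),
    qc a b (-(2 * (n : ℤ)) - psum v k) *
      ∏ i : Fin k, (qc a b (sgn (v i)) * denom' n lam t (psum v ((i : ℕ) + 1)))

/-- `A(λ,t) = Σ_{k≥1} a_k(λ,t)`. -/
noncomputable def Afun (a b : ℂ) (n : ℕ) (lam : ℂ) (t : ℝ) : ℂ := ∑' k : ℕ, ak a b n (k + 1) lam t

/-- `A′(λ,t) = Σ_{k≥1} a′_k(λ,t)`. -/
noncomputable def A'fun (a b : ℂ) (n : ℕ) (lam : ℂ) (t : ℝ) : ℂ := ∑' k : ℕ, ak' a b n (k + 1) lam t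

/-- `B(λ,t) = Σ_{k≥1} b_k(λ,t)`. -/
noncomputable def Bfun (a b : ℂ) (n : ℕ) (lam : ℂ) (t : ℝ) : ℂ := ∑' k : ℕ, bk a b n (k + 1) lam t

/-- `B′(λ,t) = Σ_{k≥1} b′_k(λ,t)`. -/
noncomputable def B'fun (a b : ℂ) (n : ℕ) (lam : ℂ) (t : ℝ) : ℂ := ∑' k : ℕ, bk' a b n (k + 1) lam t

end Mathieu

open Mathieu

open Mathieu

namespace MathieuAux

lemma psum_eq_sum {k : ℕ} (v : Fin k → Bool) : psum v k = ∑ i : Fin k, sgn (v i) := by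
  unfold psum
  congr 1
  apply Finset.filter_true_of_mem
  intro i _
  exact i.isLt

lemma psum_eq_counts {k : ℕ} (v : Fin k → Bool) :
    psum v k = ((Finset.univ.filter fun i : Fin k => v i = true).card : ℤ)
      - ((Finset.univ.filter fun i : Fin k => ¬ v i = true).card : ℤ) := by
  rw [psum_eq_sum]
  unfold sgn
  rw [Finset.sum_ite, Finset.sum_const, Finset.sum_const]
  simp
  ring

lemma card_filter_add {k : ℕ} (v : Fin k → Bool) :
    (Finset.univ.filter fun i : Fin k => v i = true).card
      + (Finset.univ.filter fun i : Fin k => ¬ v i = true).card = k := by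
  rw [Finset.card_filter_add_card_filter_not]
  simp

lemma even_psum {k : ℕ} (v : Fin k → Bool) (hk : Even k) : Even (psum v k) := by
  have h := psum_eq_counts v
  have h2 := card_filter_add v
  obtain ⟨c, hc⟩ := hk
  exact ⟨(Finset.univ.filter fun i : Fin k => v i = true).card - c, by omega⟩

lemma qc_even_eq_zero (a b : ℂ) (m : ℤ) (hm : Even m) : qc a b m = 0 := by
  unfold qc
  rw [if_neg, if_neg]
  · rintro rfl; exact (Int.not_odd_iff_even.mpr hm) odd_one
  · rintro rfl; exact (Int.not_odd_iff_even.mpr hm) ⟨-1, by ring⟩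

lemma qc_sgn (a b : ℂ) (x : Bool) : qc a b (sgn x) = if x then b else a := by
  cases x <;> norm_num [qc, sgn]

end MathieuAux
namespace MathieuAux

lemma int_abs_mul (N j x : ℤ) (hN : 0 ≤ N) (hsum : j + x = N) (hj : j ≠ 0) (hx : x ≠ 0) :
    N - 1 ≤ |j| * |x| := by
  have h1 : 1 ≤ |j| := Int.one_le_abs (by omega)
  have h2 : 1 ≤ |x| := Int.one_le_abs (by omega)
  have h3 : N ≤ |j| + |x| := by
    calc N = |j + x| := by rw [hsum, abs_of_nonneg hN]
    _ ≤ |j| + |x| := abs_add_le _ _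
  nlinarith [mul_nonneg (sub_nonneg.2 h1) (sub_nonneg.2 h2)]

lemma abs_resolvent (n : ℕ) (hn : 1 ≤ n) (lam : ℂ) (c e : ℝ)
    (h1 : ‖lam - (c : ℂ)‖ ≤ (n : ℝ))
    (h2 : 36 * (2 * (n : ℝ) - 1) ≤ |c - e|) :
    ‖(lam - (e : ℂ))⁻¹‖ ≤ (2 * (n : ℝ) - 1)⁻¹ := by
  have hn' : (1 : ℝ) ≤ (n : ℝ) := by exact_mod_cast hn
  have htri : |c - e| ≤ ‖lam - (c : ℂ)‖ + ‖lam - (e : ℂ)‖ := by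
    calc |c - e| = ‖(c : ℂ) - (e : ℂ)‖ := by
          rw [← Complex.ofReal_sub, Complex.norm_real, Real.norm_eq_abs]
    _ ≤ ‖(c : ℂ) - lam‖ + ‖lam - (e : ℂ)‖ := norm_sub_le_norm_sub_add_norm_sub _ _ _
    _ = ‖lam - (c : ℂ)‖ + ‖lam - (e : ℂ)‖ := by
          rw [norm_sub_rev]
  have hb : 2 * (n : ℝ) - 1 ≤ ‖lam - (e : ℂ)‖ := by linarith
  rw [norm_inv]
  exact inv_anti₀ (by linarith) hb

end MathieuAux
namespace MathieuAux

lemma gap_core (n : ℕ) (hn : 1 ≤ n) (t : ℝ) (ht0 : 0 ≤ t) (ht1 : t ≤ 1/10)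
    (j x : ℤ) (hsum : j + x = 2 * (n : ℤ)) (hj : j ≠ 0) (hx : x ≠ 0)
    (u w : ℝ) (hu : 2 * Real.pi * |(j : ℝ)| - 2 * t ≤ |u|) (hw : 2 * Real.pi * |(x : ℝ)| - 2 * t ≤ |w|) :
    36 * (2 * (n : ℝ) - 1) ≤ |u * w| := by
  have hπ : 3.14 ≤ Real.pi := by linarith [Real.pi_gt_d6]
  have hj1 : (1 : ℝ) ≤ |(j : ℝ)| := by
    rw [← Int.cast_abs]; exact_mod_cast Int.one_le_abs (by omega)
  have hx1 : (1 : ℝ) ≤ |(x : ℝ)| := by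
    rw [← Int.cast_abs]; exact_mod_cast Int.one_le_abs (by omega)
  have hprod : 2 * (n : ℝ) - 1 ≤ |(j : ℝ)| * |(x : ℝ)| := by
    have := int_abs_mul (2 * (n : ℤ)) j x (by positivity) hsum hj hx
    have h' : ((2 * (n : ℤ) - 1 : ℤ) : ℝ) ≤ ((|j| * |x| : ℤ) : ℝ) := by exact_mod_cast this
    push_cast at h'
    linarith
  have hu0 : (6 : ℝ) * |(j : ℝ)| ≤ |u| := by nlinarith
  have hw0 : (6 : ℝ) * |(x : ℝ)| ≤ |w| := by nlinarith
  rw [abs_mul]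
  nlinarith [abs_nonneg u, abs_nonneg w, mul_le_mul hu0 hw0 (by nlinarith) (abs_nonneg u)]

end MathieuAux
namespace MathieuAux

lemma abs_aux_bounds {A t : ℝ} (ht0 : 0 ≤ t) :
    2 * Real.pi * |A| - 2 * t ≤ |2 * Real.pi * A + 2 * t| := by
  have h := abs_add_le (2 * Real.pi * A + 2 * t) (-(2 * t))
  have h2 : |2 * Real.pi * A| = 2 * Real.pi * |A| := by
    rw [abs_mul, abs_of_nonneg (by positivity : (0:ℝ) ≤ 2 * Real.pi)]
  simp only [add_neg_cancel_right] at h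
  rw [abs_neg, abs_of_nonneg (by linarith : (0:ℝ) ≤ 2 * t)] at h
  linarith

lemma abs_denom_le (n : ℕ) (hn : 1 ≤ n) (ρ t : ℝ) (h15 : 15 * Real.pi * ρ < 1)
    (ht0 : 0 ≤ t) (htρ : t ≤ ρ) (lam : ℂ)
    (hlam : ‖lam - (((2 * Real.pi * (n : ℝ) + t) ^ 2 : ℝ) : ℂ)‖ ≤
      15 * Real.pi * (n : ℝ) * ρ)
    (j : ℤ) (hj0 : j ≠ 0) (hj2 : j ≠ 2 * (n : ℤ)) :
    ‖denom n lam t j‖ ≤ (2 * (n : ℝ) - 1)⁻¹ := by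
  have hπ : 3.14 ≤ Real.pi := by linarith [Real.pi_gt_d6]
  have hρ' : ρ < 1/10 := by nlinarith
  have ht1 : t ≤ 1/10 := by linarith
  unfold denom
  apply abs_resolvent n hn lam
  · refine hlam.trans ?_
    have hnn : (0:ℝ) ≤ (n:ℝ) := Nat.cast_nonneg n
    nlinarith
  · have key : (2 * Real.pi * (n : ℝ) + t) ^ 2 - (2 * Real.pi * ((n : ℝ) - (j : ℝ)) + t) ^ 2
        = (2 * Real.pi * (j : ℝ)) * (2 * Real.pi * ((2 * (n : ℤ) - j : ℤ) : ℝ) + 2 * t) := by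
      push_cast
      ring
    rw [key]
    apply gap_core n hn t ht0 ht1 j (2 * (n : ℤ) - j) (by ring) hj0 (by omega)
    · have h2 : |2 * Real.pi * (j : ℝ)| = 2 * Real.pi * |(j : ℝ)| := by
        rw [abs_mul, abs_of_nonneg (by positivity : (0:ℝ) ≤ 2 * Real.pi)]
      rw [h2]; linarith
    · exact abs_aux_bounds ht0

lemma abs_denom'_le (n : ℕ) (hn : 1 ≤ n) (ρ t : ℝ) (h15 : 15 * Real.pi * ρ < 1)
    (ht0 : 0 ≤ t) (htρ : t ≤ ρ) (lam : ℂ)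
    (hlam : ‖lam - (((2 * Real.pi * (n : ℝ) + t) ^ 2 : ℝ) : ℂ)‖ ≤
      15 * Real.pi * (n : ℝ) * ρ)
    (j : ℤ) (hj0 : j ≠ 0) (hj2 : j ≠ -(2 * (n : ℤ))) :
    ‖denom' n lam t j‖ ≤ (2 * (n : ℝ) - 1)⁻¹ := by
  have hπ : 3.14 ≤ Real.pi := by linarith [Real.pi_gt_d6]
  have hρ' : ρ < 1/10 := by nlinarith
  have ht1 : t ≤ 1/10 := by linarith
  unfold denom'
  apply abs_resolvent n hn lam
  · refine hlam.trans ?_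
    have hnn : (0:ℝ) ≤ (n:ℝ) := Nat.cast_nonneg n
    nlinarith
  · have key : (2 * Real.pi * (n : ℝ) + t) ^ 2 - (2 * Real.pi * ((n : ℝ) + (j : ℝ)) - t) ^ 2
        = (2 * t - 2 * Real.pi * (j : ℝ)) * (2 * Real.pi * ((2 * (n : ℤ) + j : ℤ) : ℝ)) := by
      push_cast
      ring
    rw [key]
    apply gap_core n hn t ht0 ht1 (-j) (2 * (n : ℤ) + j) (by ring) (by omega) (by omega)
    · have h4 := abs_add_le (2 * t - 2 * Real.pi * (j : ℝ)) (-(2 * t))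
      have h2 : |2 * Real.pi * (j : ℝ)| = 2 * Real.pi * |(j : ℝ)| := by
        rw [abs_mul, abs_of_nonneg (by positivity : (0:ℝ) ≤ 2 * Real.pi)]
      have h5 : 2 * t - 2 * Real.pi * (j : ℝ) + -(2 * t) = -(2 * Real.pi * (j : ℝ)) := by ring
      rw [h5, abs_neg, h2, abs_neg, abs_of_nonneg (by linarith : (0:ℝ) ≤ 2 * t)] at h4
      have h6 : |((-j : ℤ) : ℝ)| = |(j : ℝ)| := by push_cast; rw [abs_neg]
      rw [h6]
      linarith
    · have h2 : |2 * Real.pi * (((2 * (n : ℤ) + j : ℤ)) : ℝ)| = 2 * Real.pi * |(((2 * (n : ℤ) + j : ℤ)) : ℝ)| := by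
        rw [abs_mul, abs_of_nonneg (by positivity : (0:ℝ) ≤ 2 * Real.pi)]
      rw [h2]; linarith

end MathieuAux
namespace MathieuAux

lemma prod_abs_qc (a b : ℂ) {k : ℕ} (v : Fin k → Bool) :
    ∏ i : Fin k, ‖qc a b (sgn (v i))‖
      = ‖b‖ ^ (Finset.univ.filter fun i : Fin k => v i = true).card
        * ‖a‖ ^ (Finset.univ.filter fun i : Fin k => ¬ v i = true).card := by
  have h : ∀ i : Fin k, ‖qc a b (sgn (v i))‖
      = if v i = true then ‖b‖ else ‖a‖ := by
    intro i
    rw [qc_sgn]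
    exact apply_ite (‖·‖) _ _ _
  rw [Finset.prod_congr rfl (fun i _ => h i), Finset.prod_ite, Finset.prod_const,
    Finset.prod_const]

lemma head_prod_bound (a b : ℂ) (m' : ℕ) (v : Fin (2 * m' + 1) → Bool) :
    ‖qc a b (-psum v (2 * m' + 1))‖
        * ∏ i : Fin (2 * m' + 1), ‖qc a b (sgn (v i))‖
      ≤ ‖a * b‖ ^ (m' + 1) := by
  rw [prod_abs_qc a b v]
  set T := (Finset.univ.filter fun i : Fin (2 * m' + 1) => v i = true).card with hT
  set F := (Finset.univ.filter fun i : Fin (2 * m' + 1) => ¬ v i = true).card with hF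
  have hTF : T + F = 2 * m' + 1 := card_filter_add v
  have hP : psum v (2 * m' + 1) = (T : ℤ) - (F : ℤ) := psum_eq_counts v
  by_cases h1 : psum v (2 * m' + 1) = 1
  · have hTm : T = m' + 1 ∧ F = m' := by omega
    rw [hTm.1, hTm.2, h1]
    have : qc a b (-(1 : ℤ)) = a := by norm_num [qc]
    rw [this]
    refine le_of_eq ?_
    rw [norm_mul, mul_pow]
    ring
  by_cases h2 : psum v (2 * m' + 1) = -1
  · have hTm : T = m' ∧ F = m' + 1 := by omega
    rw [hTm.1, hTm.2, h2]
    have : qc a b (-(-1 : ℤ)) = b := by norm_num [qc]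
    rw [this]
    refine le_of_eq ?_
    rw [norm_mul, mul_pow]
    ring
  · have : qc a b (-psum v (2 * m' + 1)) = 0 := by
      unfold qc
      rw [if_neg (by omega), if_neg (by omega)]
    rw [this]
    simp only [norm_zero, zero_mul]
    positivity

lemma sum_bound (a b : ℂ) (n m' : ℕ) (hn : 1 ≤ n)
    (P : (Fin (2 * m' + 1) → Bool) → Prop) [DecidablePred P] (d : ℤ → ℂ)
    (hd : ∀ v : Fin (2 * m' + 1) → Bool, P v → ∀ i : Fin (2 * m' + 1),
      ‖d (psum v ((i : ℕ) + 1))‖ ≤ (2 * (n : ℝ) - 1)⁻¹) :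
    ‖∑ v ∈ Finset.univ.filter P,
        qc a b (-(psum v (2 * m' + 1))) *
          ∏ i : Fin (2 * m' + 1), (qc a b (sgn (v i)) * d (psum v ((i : ℕ) + 1)))‖
      ≤ (4 * ‖a * b‖) ^ (m' + 1) * ((2 * (n : ℝ) - 1) ^ (2 * m' + 1))⁻¹ := by
  have hn1 : (1 : ℝ) ≤ 2 * (n : ℝ) - 1 := by
    have : (1 : ℝ) ≤ (n : ℝ) := by exact_mod_cast hn
    linarith
  have hinv0 : (0 : ℝ) ≤ (2 * (n : ℝ) - 1)⁻¹ := by positivity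
  -- per-term bound
  have hterm : ∀ v ∈ Finset.univ.filter P,
      ‖qc a b (-(psum v (2 * m' + 1))) *
          ∏ i : Fin (2 * m' + 1), (qc a b (sgn (v i)) * d (psum v ((i : ℕ) + 1)))‖
        ≤ ‖a * b‖ ^ (m' + 1) * ((2 * (n : ℝ) - 1)⁻¹) ^ (2 * m' + 1) := by
    intro v hv
    have hPv : P v := (Finset.mem_filter.1 hv).2
    rw [norm_mul, norm_prod]
    simp only [norm_mul]
    rw [Finset.prod_mul_distrib, ← mul_assoc]
    have hh := head_prod_bound a b m' v
    rw [norm_mul] at hh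
    refine mul_le_mul hh ?_ ?_ (by positivity)
    · calc ∏ i : Fin (2 * m' + 1), ‖d (psum v ((i : ℕ) + 1))‖
          ≤ ∏ _i : Fin (2 * m' + 1), (2 * (n : ℝ) - 1)⁻¹ :=
            Finset.prod_le_prod (fun i _ => norm_nonneg _) (fun i _ => hd v hPv i)
      _ = ((2 * (n : ℝ) - 1)⁻¹) ^ (2 * m' + 1) := by rw [Finset.prod_const, Finset.card_univ, Fintype.card_fin]
    · exact Finset.prod_nonneg fun i _ => norm_nonneg _
  calc ‖∑ v ∈ Finset.univ.filter P,
        qc a b (-(psum v (2 * m' + 1))) * ∏ i : Fin (2 * m' + 1), (qc a b (sgn (v i)) * d (psum v ((i : ℕ) + 1)))‖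
      ≤ ∑ v ∈ Finset.univ.filter P, ‖
          qc a b (-(psum v (2 * m' + 1))) * ∏ i : Fin (2 * m' + 1), (qc a b (sgn (v i)) * d (psum v ((i : ℕ) + 1)))‖ :=
        norm_sum_le _ _
    _ ≤ ∑ _v ∈ Finset.univ.filter P, ‖a * b‖ ^ (m' + 1) * ((2 * (n : ℝ) - 1)⁻¹) ^ (2 * m' + 1) :=
        Finset.sum_le_sum hterm
    _ = ((Finset.univ.filter P).card : ℝ) * (‖a * b‖ ^ (m' + 1) * ((2 * (n : ℝ) - 1)⁻¹) ^ (2 * m' + 1)) := by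
        rw [Finset.sum_const, nsmul_eq_mul]
    _ ≤ (2 ^ (2 * m' + 1) : ℝ) * (‖a * b‖ ^ (m' + 1) * ((2 * (n : ℝ) - 1)⁻¹) ^ (2 * m' + 1)) := by
        refine mul_le_mul_of_nonneg_right ?_ (by positivity)
        have hcard : (Finset.univ.filter P).card ≤ 2 ^ (2 * m' + 1) := by
          calc (Finset.univ.filter P).card ≤ (Finset.univ : Finset (Fin (2 * m' + 1) → Bool)).card :=
              Finset.card_filter_le _ _
          _ = 2 ^ (2 * m' + 1) := by
              rw [Finset.card_univ]
              simp [Fintype.card_fun]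
        exact_mod_cast hcard
    _ ≤ (4 * ‖a * b‖) ^ (m' + 1) * ((2 * (n : ℝ) - 1) ^ (2 * m' + 1))⁻¹ := by
        rw [mul_pow, ← inv_pow]
        have h2 : (2 : ℝ) ^ (2 * m' + 1) ≤ 4 ^ (m' + 1) := by
          have : (4 : ℝ) ^ (m' + 1) = 2 ^ (2 * m' + 2) := by
            rw [show (4:ℝ) = 2^2 by norm_num, ← pow_mul]
            ring_nf
          rw [this]
          exact pow_le_pow_right₀ (by norm_num) (by omega)
        calc (2 ^ (2 * m' + 1) : ℝ) * (‖a * b‖ ^ (m' + 1) * ((2 * (n : ℝ) - 1)⁻¹) ^ (2 * m' + 1))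
            ≤ 4 ^ (m' + 1) * (‖a * b‖ ^ (m' + 1) * ((2 * (n : ℝ) - 1)⁻¹) ^ (2 * m' + 1)) :=
              mul_le_mul_of_nonneg_right h2 (by positivity)
          _ = 4 ^ (m' + 1) * ‖a * b‖ ^ (m' + 1) * ((2 * (n : ℝ) - 1)⁻¹) ^ (2 * m' + 1) := by ring

end MathieuAux
/-- Formulas (51)-(52): `a_{2m} = a′_{2m} = 0` and the odd terms satisfy
`|a_{2m-1}| ≤ (4|ab|)^m (2n-1)^{-(2m-1)}` on `U(n,t,ρ)`. -/
theorem stmt4 (a b : ℂ) (ρ : ℝ) (hρ₀ : 0 < ρ) (hρ₁ : ρ < 1 / (15 * Real.pi)) :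
    ∃ N : ℕ, ∀ n : ℕ, N < n → ∀ m : ℕ, 1 ≤ m → ∀ t ∈ Set.Icc (0 : ℝ) ρ, ∀ lam : ℂ,
      ‖lam - (((2 * Real.pi * (n : ℝ) + t) ^ 2 : ℝ) : ℂ)‖ ≤ 15 * Real.pi * (n : ℝ) * ρ →
      ak a b n (2 * m) lam t = 0 ∧ ak' a b n (2 * m) lam t = 0 ∧
      ‖ak a b n (2 * m - 1) lam t‖ ≤
        (4 * ‖a * b‖) ^ m * ((2 * (n : ℝ) - 1) ^ (2 * m - 1))⁻¹ ∧
      ‖ak' a b n (2 * m - 1) lam t‖ ≤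
        (4 * ‖a * b‖) ^ m * ((2 * (n : ℝ) - 1) ^ (2 * m - 1))⁻¹ := by
  have hπ : 3.14 ≤ Real.pi := by linarith [Real.pi_gt_d6]
  have h15 : 15 * Real.pi * ρ < 1 := by
    rw [lt_div_iff₀ (by positivity : (0:ℝ) < 15 * Real.pi)] at hρ₁
    linarith
  refine ⟨0, ?_⟩
  intro n hn m hm t ht lam hlam
  obtain ⟨ht0, htρ⟩ := ht
  have hn1 : 1 ≤ n := hn
  obtain ⟨m', rfl⟩ : ∃ m', m = m' + 1 := ⟨m - 1, by omega⟩
  have hodd : 2 * (m' + 1) - 1 = 2 * m' + 1 := by omega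
  refine ⟨?_, ?_, ?_, ?_⟩
  · unfold ak
    apply Finset.sum_eq_zero
    intro v hv
    rw [MathieuAux.qc_even_eq_zero a b _
      (Even.neg (MathieuAux.even_psum v ⟨m' + 1, by ring⟩)), zero_mul]
  · unfold ak'
    apply Finset.sum_eq_zero
    intro v hv
    rw [MathieuAux.qc_even_eq_zero a b _
      (Even.neg (MathieuAux.even_psum v ⟨m' + 1, by ring⟩)), zero_mul]
  · rw [hodd]
    unfold ak
    exact MathieuAux.sum_bound a b n m' hn1 (Admissible n (2 * m' + 1)) (denom n lam t)
      (fun v hv i => MathieuAux.abs_denom_le n hn1 ρ t h15 ht0 htρ lam hlam _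
        (hv i).1 (hv i).2)
  · rw [hodd]
    unfold ak'
    exact MathieuAux.sum_bound a b n m' hn1 (Coadmissible n (2 * m' + 1)) (denom' n lam t)
      (fun v hv i => MathieuAux.abs_denom'_le n hn1 ρ t h15 ht0 htρ lam hlam _
        (hv i).1 (hv i).2)
end

section
/- Let a, b ∈ ℂ and use the admissible-sequence definitions of a_k(λ,t) and a′_k(λ,t) for the Mathieu potential. For every M > 0 there exist K > 0 and N ∈ ℕ such that for all integers n > N, all t ∈ [0, n^{−2}], and all λ ∈ ℂ with |λ − (2πn)²| ≤ M/n: the series A(λ,t) = Σ_{k≥1} a_k(λ,t) and A′(λ,t) = Σ_{k≥1} a′_k(λ,t) converge absolutely, |A(λ,t)| ≤ K/n², and |A′(λ,t)| ≤ K/n². -/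
open Finset

open Mathieu
noncomputable def Qab (a b : ℂ) : ℝ := max (max (‖a‖) (‖b‖)) 1

lemma one_le_Qab (a b : ℂ) : 1 ≤ Qab a b := le_max_right _ _

lemma qc_abs_le (a b : ℂ) (m : ℤ) : ‖qc a b m‖ ≤ Qab a b := by
  unfold qc Qab
  split_ifs
  · exact le_trans (le_max_left _ _) (le_max_left _ _)
  · exact le_trans (le_max_right _ _) (le_max_left _ _)
  · simp

lemma fact_lb (m : ℤ) (hm : m ≠ 0) (t : ℝ) (ht : |t| ≤ 1) :
    5 * |(m : ℝ)| ≤ |2 * Real.pi * (m : ℝ) + t| := by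
  have h1 : (1:ℝ) ≤ |(m:ℝ)| := by
    rw [← Int.cast_abs]; exact_mod_cast Int.one_le_abs hm
  have hpi : (3:ℝ) < Real.pi := Real.pi_gt_three
  have h2 : |2 * Real.pi * (m:ℝ)| = 2 * Real.pi * |(m:ℝ)| := by
    rw [abs_mul, abs_of_pos (by positivity)]
  have h3 : |2 * Real.pi * (m:ℝ)| - |t| ≤ |2 * Real.pi * (m:ℝ) + t| := by
    have := abs_add_le (2 * Real.pi * (m:ℝ)) t
    have h4 : |2 * Real.pi * (m:ℝ)| ≤ |2 * Real.pi * (m:ℝ) + t| + |t| := by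
      calc |2 * Real.pi * (m:ℝ)| = |(2 * Real.pi * (m:ℝ) + t) + (-t)| := by ring_nf
        _ ≤ |2 * Real.pi * (m:ℝ) + t| + |(-t)| := abs_add_le _ _
        _ = |2 * Real.pi * (m:ℝ) + t| + |t| := by rw [abs_neg]
    linarith
  nlinarith [abs_nonneg t]
lemma key_denom (M : ℝ) (n : ℕ) (hn1 : 1 ≤ n) (hnM : M ≤ n) (lam : ℂ)
    (hlam : ‖lam - (((2 * Real.pi * (n:ℝ)) ^ 2 : ℝ) : ℂ)‖ ≤ M / n)
    (t : ℝ) (ht : |t| ≤ 1) (j : ℤ) (hj0 : j ≠ 0) (hj2 : j ≠ 2 * n) :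
    24 * (n:ℝ) ≤ ‖lam - (((2 * Real.pi * ((n:ℝ) - (j:ℝ)) + t) ^ 2 : ℝ) : ℂ)‖ := by
  have hnR : (1:ℝ) ≤ (n:ℝ) := by exact_mod_cast hn1
  set P : ℝ := (2 * Real.pi * (n:ℝ)) ^ 2 with hP
  set x : ℝ := (2 * Real.pi * ((n:ℝ) - (j:ℝ)) + t) ^ 2 with hx
  -- factorization
  have hfac : P - x = (2 * Real.pi * (j:ℝ) - t) * (2 * Real.pi * (2 * (n:ℝ) - (j:ℝ)) + t) := by
    rw [hP, hx]; ring
  have hj2' : 2 * (n:ℤ) - j ≠ 0 := by omega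
  have hf1 : 5 * |(j:ℝ)| ≤ |2 * Real.pi * (j:ℝ) - t| := by
    have := fact_lb j hj0 (-t) (by rwa [abs_neg])
    simpa [sub_eq_add_neg] using this
  have hf2 : 5 * |((2 * (n:ℤ) - j : ℤ) : ℝ)| ≤ |2 * Real.pi * (2 * (n:ℝ) - (j:ℝ)) + t| := by
    have := fact_lb (2 * (n:ℤ) - j) hj2' t ht
    have hcast : ((2 * (n:ℤ) - j : ℤ) : ℝ) = 2 * (n:ℝ) - (j:ℝ) := by push_cast; ring
    rw [hcast] at this
    rw [hcast]
    exact this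
  have hja : (1:ℝ) ≤ |(j:ℝ)| := by
    rw [← Int.cast_abs]; exact_mod_cast Int.one_le_abs hj0
  have hjb : (1:ℝ) ≤ |((2 * (n:ℤ) - j : ℤ) : ℝ)| := by
    rw [← Int.cast_abs]; exact_mod_cast Int.one_le_abs hj2'
  have htri : 2 * (n:ℝ) ≤ |(j:ℝ)| + |((2 * (n:ℤ) - j : ℤ) : ℝ)| := by
    have := abs_add_le ((j:ℝ)) (((2 * (n:ℤ) - j : ℤ) : ℝ))
    have h5 : (j:ℝ) + ((2 * (n:ℤ) - j : ℤ) : ℝ) = 2 * (n:ℝ) := by push_cast; ring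
    rw [h5] at this
    calc 2 * (n:ℝ) ≤ |2 * (n:ℝ)| := le_abs_self _
      _ ≤ _ := this
  have hprod : 25 * (n:ℝ) ≤ |P - x| := by
    rw [hfac, abs_mul]
    nlinarith [abs_nonneg (2 * Real.pi * (j:ℝ) - t), abs_nonneg (2 * Real.pi * (2 * (n:ℝ) - (j:ℝ)) + t)]
  -- triangle inequality on ℂ
  have htri2 : ‖(P:ℂ) - (x:ℂ)‖ ≤ ‖(P:ℂ) - lam‖ + ‖lam - (x:ℂ)‖ :=
    norm_sub_le_norm_sub_add_norm_sub _ _ _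
  have h6 : ‖(P:ℂ) - (x:ℂ)‖ = |P - x| := by
    rw [← Complex.ofReal_sub, Complex.norm_real, Real.norm_eq_abs]
  have h7 : ‖(P:ℂ) - lam‖ ≤ M / n := by
    rwa [← norm_neg, neg_sub]
  have hMn : M / n ≤ (n:ℝ) := by
    rw [div_le_iff₀ (by linarith)]
    nlinarith
  have := htri2
  rw [h6] at this
  linarith [hprod]
lemma generic_bound (a b : ℂ) (k : ℕ) (S : Finset (Fin k → Bool)) (den : ℤ → ℂ) (d : ℝ)
    (hd : 0 ≤ d)
    (hden : ∀ v ∈ S, ∀ i : Fin k, ‖den (psum v ((i:ℕ) + 1))‖ ≤ d) :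
    ‖∑ v ∈ S, qc a b (-(psum v k)) *
        ∏ i : Fin k, (qc a b (sgn (v i)) * den (psum v ((i:ℕ) + 1)))‖
      ≤ Qab a b * (2 * Qab a b * d) ^ k := by
  set Q := Qab a b with hQ
  have hQ1 : (1:ℝ) ≤ Q := one_le_Qab a b
  have hterm : ∀ v ∈ S, ‖qc a b (-(psum v k)) *
      ∏ i : Fin k, (qc a b (sgn (v i)) * den (psum v ((i:ℕ) + 1)))‖ ≤ Q * (Q * d) ^ k := by
    intro v hv
    rw [norm_mul, norm_prod]
    have h1 : ∏ i : Fin k, ‖qc a b (sgn (v i)) * den (psum v ((i:ℕ) + 1))‖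
        ≤ ∏ _i : Fin k, (Q * d) := by
      apply Finset.prod_le_prod
      · intro i _; exact norm_nonneg _
      · intro i _
        rw [norm_mul]
        exact mul_le_mul (qc_abs_le a b _) (hden v hv i) (norm_nonneg _)
          (by linarith)
    rw [Finset.prod_const, Finset.card_univ, Fintype.card_fin] at h1
    exact mul_le_mul (qc_abs_le a b _) h1 (Finset.prod_nonneg fun i _ => norm_nonneg _)
      (by linarith)
  calc ‖∑ v ∈ S, _‖ ≤ ∑ v ∈ S, ‖qc a b (-(psum v k)) *
        ∏ i : Fin k, (qc a b (sgn (v i)) * den (psum v ((i:ℕ) + 1)))‖ :=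
        norm_sum_le _ _
    _ ≤ ∑ _v ∈ S, Q * (Q * d) ^ k := Finset.sum_le_sum hterm
    _ = S.card * (Q * (Q * d) ^ k) := by rw [Finset.sum_const, nsmul_eq_mul]
    _ ≤ 2 ^ k * (Q * (Q * d) ^ k) := by
        apply mul_le_mul_of_nonneg_right
        · have : S.card ≤ (Finset.univ : Finset (Fin k → Bool)).card := Finset.card_le_card (Finset.subset_univ S)
          rw [Finset.card_univ] at this
          simp only [Fintype.card_fun, Fintype.card_bool, Fintype.card_fin] at this
          exact_mod_cast le_trans (Nat.cast_le.mpr this) (le_refl _)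
        · positivity
    _ = Q * (2 * Q * d) ^ k := by rw [mul_pow, mul_pow]; ring
lemma denom'_eq (n : ℕ) (lam : ℂ) (t : ℝ) (j : ℤ) :
    denom' n lam t j = denom n lam (-t) (-j) := by
  unfold denom denom'
  congr 2
  push_cast
  ring

lemma denom_abs_le (M : ℝ) (n : ℕ) (hn1 : 1 ≤ n) (hnM : M ≤ n) (lam : ℂ)
    (hlam : ‖lam - (((2 * Real.pi * (n:ℝ)) ^ 2 : ℝ) : ℂ)‖ ≤ M / n)
    (t : ℝ) (ht : |t| ≤ 1) (j : ℤ) (hj0 : j ≠ 0) (hj2 : j ≠ 2 * n) :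
    ‖denom n lam t j‖ ≤ (24 * (n:ℝ))⁻¹ := by
  have h := key_denom M n hn1 hnM lam hlam t ht j hj0 hj2
  unfold denom
  rw [norm_inv]
  exact inv_anti₀ (by positivity) h

lemma ak_abs_le (M : ℝ) (a b : ℂ) (n k : ℕ) (hn1 : 1 ≤ n) (hnM : M ≤ n) (lam : ℂ)
    (hlam : ‖lam - (((2 * Real.pi * (n:ℝ)) ^ 2 : ℝ) : ℂ)‖ ≤ M / n)
    (t : ℝ) (ht : |t| ≤ 1) :
    ‖ak a b n k lam t‖ ≤ Qab a b * (Qab a b / (12 * n)) ^ k := by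
  have h := generic_bound a b k (Finset.univ.filter (Admissible n k)) (denom n lam t)
    ((24 * (n:ℝ))⁻¹) (by positivity) ?_
  · unfold ak
    convert h using 3
    have hn : (n:ℝ) ≠ 0 := by positivity
    field_simp
    ring
  · intro v hv i
    rw [Finset.mem_filter] at hv
    obtain ⟨h1, h2⟩ := hv.2 i
    exact denom_abs_le M n hn1 hnM lam hlam t ht _ h1 h2

lemma ak'_abs_le (M : ℝ) (a b : ℂ) (n k : ℕ) (hn1 : 1 ≤ n) (hnM : M ≤ n) (lam : ℂ)
    (hlam : ‖lam - (((2 * Real.pi * (n:ℝ)) ^ 2 : ℝ) : ℂ)‖ ≤ M / n)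
    (t : ℝ) (ht : |t| ≤ 1) :
    ‖ak' a b n k lam t‖ ≤ Qab a b * (Qab a b / (12 * n)) ^ k := by
  have h := generic_bound a b k (Finset.univ.filter (Coadmissible n k)) (denom' n lam t)
    ((24 * (n:ℝ))⁻¹) (by positivity) ?_
  · unfold ak'
    convert h using 3
    have hn : (n:ℝ) ≠ 0 := by positivity
    field_simp
    ring
  · intro v hv i
    rw [Finset.mem_filter] at hv
    obtain ⟨h1, h2⟩ := hv.2 i
    rw [denom'_eq]
    exact denom_abs_le M n hn1 hnM lam hlam (-t) (by rwa [abs_neg]) _ (by omega) (by omega)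
lemma psum_one {v : Fin 1 → Bool} : psum v 1 = sgn (v 0) := by
  unfold psum
  rw [Finset.filter_true_of_mem (fun i _ => by omega)]
  exact Fin.sum_univ_one _

lemma adm_one (n : ℕ) (v : Fin 1 → Bool) : Admissible n 1 v := by
  intro s
  have hs : (s:ℕ) = 0 := Nat.lt_one_iff.mp s.isLt
  rw [hs]
  norm_num [psum_one]
  unfold sgn
  constructor <;> split_ifs <;> first | omega | simp

lemma coadm_one (n : ℕ) (v : Fin 1 → Bool) : Coadmissible n 1 v := by
  intro s
  have hs : (s:ℕ) = 0 := Nat.lt_one_iff.mp s.isLt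
  rw [hs]
  norm_num [psum_one]
  unfold sgn
  constructor <;> split_ifs <;> first | omega | simp

lemma sum_fin1_bool (F : (Fin 1 → Bool) → ℂ) :
    ∑ v : Fin 1 → Bool, F v = F (fun _ => true) + F (fun _ => false) := by
  rw [Fintype.sum_equiv (Equiv.funUnique (Fin 1) Bool) F (fun y => F (fun _ => y))
    (fun v => congrArg F (funext fun i => congrArg v (Subsingleton.elim i default)))]
  exact Fintype.sum_bool _

lemma ak_one_eq (a b : ℂ) (n : ℕ) (lam : ℂ) (t : ℝ) :
    ak a b n 1 lam t = a * b * (denom n lam t 1 + denom n lam t (-1)) := by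
  unfold ak
  rw [Finset.filter_true_of_mem (fun v _ => adm_one n v)]
  rw [sum_fin1_bool]
  simp only [Fin.sum_univ_one, Fin.prod_univ_one, Fin.val_zero, zero_add, psum_one]
  unfold sgn qc
  norm_num
  ring
lemma ak'_one_eq (a b : ℂ) (n : ℕ) (lam : ℂ) (t : ℝ) :
    ak' a b n 1 lam t = a * b * (denom' n lam t 1 + denom' n lam t (-1)) := by
  unfold ak'
  rw [Finset.filter_true_of_mem (fun v _ => coadm_one n v)]
  rw [sum_fin1_bool]
  simp only [Fin.sum_univ_one, Fin.prod_univ_one, Fin.val_zero, zero_add, psum_one]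
  unfold sgn qc
  norm_num
  ring

set_option maxHeartbeats 1000000 in
lemma cancel_bound (M : ℝ) (hM : 0 < M) (n : ℕ) (hn1 : 1 ≤ n) (hnM : M ≤ n) (lam : ℂ)
    (hlam : ‖lam - (((2 * Real.pi * (n:ℝ)) ^ 2 : ℝ) : ℂ)‖ ≤ M / n)
    (t : ℝ) (ht : |t| ≤ ((n:ℝ) ^ 2)⁻¹) :
    ‖denom n lam t 1 + denom n lam t (-1)‖
      ≤ (2 * M + 110) / (576 * (n:ℝ) ^ 2) := by
  have hnR : (1:ℝ) ≤ (n:ℝ) := by exact_mod_cast hn1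
  have ht1 : |t| ≤ 1 := le_trans ht (by
    rw [inv_le_one_iff₀]; right; nlinarith)
  set c1 : ℝ := (2 * Real.pi * ((n:ℝ) - ((1:ℤ):ℝ)) + t) ^ 2 with hc1
  set c2 : ℝ := (2 * Real.pi * ((n:ℝ) - ((-1:ℤ):ℝ)) + t) ^ 2 with hc2
  set x : ℂ := lam - (c1 : ℂ) with hxdef
  set y : ℂ := lam - (c2 : ℂ) with hydef
  have hx : 24 * (n:ℝ) ≤ ‖x‖ :=
    key_denom M n hn1 hnM lam hlam t ht1 1 (by omega) (by omega)
  have hy : 24 * (n:ℝ) ≤ ‖y‖ :=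
    key_denom M n hn1 hnM lam hlam t ht1 (-1) (by omega) (by omega)
  have hx0 : x ≠ 0 := by
    intro h; rw [h] at hx; simp at hx; linarith
  have hy0 : y ≠ 0 := by
    intro h; rw [h] at hy; simp at hy; linarith
  have heq : denom n lam t 1 + denom n lam t (-1) = (x + y) * (x * y)⁻¹ := by
    unfold denom
    rw [← hxdef, ← hydef]
    field_simp
    ring
  -- bound on |x + y|
  have htn : |t| * (n:ℝ) ≤ 1 := by
    have h2 : ((n:ℝ) ^ 2)⁻¹ * (n:ℝ) ≤ 1 := by
      rw [sq, mul_inv]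
      have hne : (n:ℝ) ≠ 0 := by linarith
      rw [mul_assoc, inv_mul_cancel₀ hne, mul_one]
      rw [inv_le_one_iff₀]; right; exact hnR
    calc |t| * (n:ℝ) ≤ ((n:ℝ) ^ 2)⁻¹ * (n:ℝ) := by
          apply mul_le_mul_of_nonneg_right ht (by linarith)
      _ ≤ 1 := h2
  have hr : |2 * (2 * Real.pi * (n:ℝ)) ^ 2 - c1 - c2| ≤ 108 := by
    have hkey : 2 * (2 * Real.pi * (n:ℝ)) ^ 2 - c1 - c2
        = -(8 * Real.pi * (t * (n:ℝ))) - 2 * t ^ 2 - 8 * Real.pi ^ 2 := by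
      rw [hc1, hc2]; push_cast; ring
    rw [hkey]
    have hpisq : Real.pi ^ 2 ≤ 10 := by nlinarith [Real.pi_lt_d2, Real.pi_gt_three]
    have hpisq' : 9 ≤ Real.pi ^ 2 := by nlinarith [Real.pi_gt_three]
    have hs : |t * (n:ℝ)| ≤ 1 := by
      rw [abs_mul, abs_of_nonneg (by linarith : (0:ℝ) ≤ (n:ℝ))]; exact htn
    obtain ⟨hs1, hs2⟩ := abs_le.mp hs
    obtain ⟨ht1', ht2'⟩ := abs_le.mp ht1
    have hpiL : (3:ℝ) < Real.pi := Real.pi_gt_three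
    have hpiU : Real.pi < 3.15 := Real.pi_lt_d2
    have hb0 : |8 * Real.pi * (t * (n:ℝ))| ≤ 8 * Real.pi := by
      rw [abs_mul, abs_of_pos (by positivity : (0:ℝ) < 8 * Real.pi)]
      calc 8 * Real.pi * |t * (n:ℝ)| ≤ 8 * Real.pi * 1 :=
            mul_le_mul_of_nonneg_left hs (by positivity)
        _ = 8 * Real.pi := mul_one _
    obtain ⟨hb2, hb1⟩ := abs_le.mp hb0
    have hb3 : 2 * t ^ 2 ≤ 2 := by nlinarith
    have hb4 : 0 ≤ 2 * t ^ 2 := by positivity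
    rw [abs_le]
    constructor <;> linarith
  have hxy : ‖x + y‖ ≤ 2 * M + 110 := by
    have hsplit : x + y = 2 * (lam - (((2 * Real.pi * (n:ℝ)) ^ 2 : ℝ) : ℂ))
        + ((2 * (2 * Real.pi * (n:ℝ)) ^ 2 - c1 - c2 : ℝ) : ℂ) := by
      rw [hxdef, hydef]; push_cast; ring
    rw [hsplit]
    calc ‖_‖ ≤ ‖2 * (lam - (((2 * Real.pi * (n:ℝ)) ^ 2 : ℝ) : ℂ))‖
          + ‖((2 * (2 * Real.pi * (n:ℝ)) ^ 2 - c1 - c2 : ℝ) : ℂ)‖ :=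
        norm_add_le _ _
      _ ≤ 2 * (M / n) + 108 := by
          rw [norm_mul, Complex.norm_two, Complex.norm_real, Real.norm_eq_abs]
          exact add_le_add (by linarith [hlam]) hr
      _ ≤ 2 * M + 110 := by
          have : M / n ≤ M := by
            rw [div_le_iff₀ (by linarith)]; nlinarith
          linarith
  rw [heq, norm_mul, norm_inv, norm_mul]
  have h24 : (0:ℝ) < 24 * (n:ℝ) := by linarith
  calc ‖x + y‖ * (‖x‖ * ‖y‖)⁻¹
      ≤ (2 * M + 110) * ((24 * (n:ℝ)) * (24 * (n:ℝ)))⁻¹ := by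
        apply mul_le_mul hxy _ (by positivity) (by linarith)
        apply inv_anti₀ (by positivity)
        exact mul_le_mul hx hy (le_of_lt h24) (norm_nonneg _)
    _ = (2 * M + 110) / (576 * (n:ℝ) ^ 2) := by
        rw [div_eq_mul_inv]; congr 1; ring
set_option maxHeartbeats 1000000 in
lemma series_bound (f : ℕ → ℂ) (Q r C : ℝ) (hQ0 : 0 ≤ Q) (hr0 : 0 ≤ r) (hr12 : r ≤ 1 / 12)
    (hf : ∀ k, ‖f k‖ ≤ Q * r ^ (k + 1)) (hf0 : ‖f 0‖ ≤ C) :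
    ‖∑' k, f k‖ ≤ C + 2 * Q * r ^ 2 := by
  have hr1 : r < 1 := by linarith
  have hgeo : Summable (fun k : ℕ => r ^ k) := summable_geometric_of_lt_one hr0 hr1
  have hsum : Summable (fun k : ℕ => ‖f k‖) := by
    apply Summable.of_nonneg_of_le (fun k => norm_nonneg _)
      (fun k => le_trans (hf k) (le_of_eq (by rw [pow_succ]; ring))) (hgeo.mul_left (Q * r))
  have hsum' : Summable (fun k : ℕ => ‖f k‖) := by
    exact hsum
  have h1 : ‖∑' k, f k‖ ≤ ∑' k, ‖f k‖ := by
    have := norm_tsum_le_tsum_norm hsum'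
    exact this
  rw [hsum.tsum_eq_zero_add] at h1
  have hstep : ∀ k : ℕ, ‖f (k + 1)‖ ≤ (Q * r ^ 2) * r ^ k := by
    intro k
    calc ‖f (k + 1)‖ ≤ Q * r ^ (k + 2) := hf (k + 1)
      _ = (Q * r ^ 2) * r ^ k := by ring
  have hsucc : Summable (fun k : ℕ => ‖f (k + 1)‖) :=
    Summable.of_nonneg_of_le (fun k => norm_nonneg _) hstep
      (hgeo.mul_left (Q * r ^ 2))
  have h2 : ∑' k : ℕ, ‖f (k + 1)‖ ≤ ∑' k : ℕ, (Q * r ^ 2) * r ^ k :=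
    Summable.tsum_le_tsum hstep hsucc (hgeo.mul_left (Q * r ^ 2))
  have h3 : ∑' k : ℕ, (Q * r ^ 2) * r ^ k = Q * r ^ 2 * (1 - r)⁻¹ := by
    rw [tsum_mul_left, tsum_geometric_of_lt_one hr0 hr1]
  have hinv2 : (1 - r)⁻¹ ≤ 2 := by
    have h12 : (1:ℝ) / 2 ≤ 1 - r := by linarith
    calc (1 - r)⁻¹ ≤ ((1:ℝ) / 2)⁻¹ := inv_anti₀ (by norm_num) h12
      _ = 2 := by norm_num
  have h4 : Q * r ^ 2 * (1 - r)⁻¹ ≤ 2 * Q * r ^ 2 := by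
    calc Q * r ^ 2 * (1 - r)⁻¹ ≤ Q * r ^ 2 * 2 :=
          mul_le_mul_of_nonneg_left hinv2 (by positivity)
      _ = 2 * Q * r ^ 2 := by ring
  linarith
set_option maxHeartbeats 1000000 in
/-- Formula (53): on `|λ - (2πn)²| ≤ M/n`, `t ∈ [0, n⁻²]`, the series `A(λ,t)` and
`A′(λ,t)` converge absolutely and are `O(n⁻²)`. -/
theorem stmt5 (a b : ℂ) (M : ℝ) (hM : 0 < M) :
    ∃ K : ℝ, 0 < K ∧ ∃ N : ℕ, ∀ n : ℕ, N < n →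
      ∀ t : ℝ, t ∈ Set.Icc (0 : ℝ) (((n : ℝ) ^ 2)⁻¹) →
      ∀ lam : ℂ, ‖lam - (((2 * Real.pi * (n : ℝ)) ^ 2 : ℝ) : ℂ)‖ ≤ M / n →
        Summable (fun k : ℕ => ‖ak a b n (k + 1) lam t‖) ∧
        Summable (fun k : ℕ => ‖ak' a b n (k + 1) lam t‖) ∧
        ‖Afun a b n lam t‖ ≤ K / (n : ℝ) ^ 2 ∧
        ‖A'fun a b n lam t‖ ≤ K / (n : ℝ) ^ 2 := by
  set Q := Qab a b with hQdef
  have hQ1 : (1:ℝ) ≤ Q := one_le_Qab a b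
  refine ⟨Q ^ 3 * (2 * M + 200), by positivity, ⌈M⌉₊ + ⌈Q⌉₊ + 1, ?_⟩
  intro n hn t htmem lam hlam
  have hn1 : 1 ≤ n := by omega
  have hnR : (1:ℝ) ≤ (n:ℝ) := by exact_mod_cast hn1
  have hn2pos : (0:ℝ) < (n:ℝ) ^ 2 := by positivity
  have hnM : M ≤ (n:ℝ) := by
    have h1 : M ≤ (⌈M⌉₊ : ℝ) := Nat.le_ceil M
    have h2 : (⌈M⌉₊ : ℝ) ≤ (n:ℝ) := by exact_mod_cast (by omega : ⌈M⌉₊ ≤ n)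
    linarith
  have hnQ : Q ≤ (n:ℝ) := by
    have h1 : Q ≤ (⌈Q⌉₊ : ℝ) := Nat.le_ceil Q
    have h2 : (⌈Q⌉₊ : ℝ) ≤ (n:ℝ) := by exact_mod_cast (by omega : ⌈Q⌉₊ ≤ n)
    linarith
  obtain ⟨ht0, htub⟩ := htmem
  have htabs : |t| ≤ ((n:ℝ) ^ 2)⁻¹ := by rwa [abs_of_nonneg ht0]
  have ht1 : |t| ≤ 1 := le_trans htabs (by
    rw [inv_le_one_iff₀]; right; nlinarith)
  set r : ℝ := Q / (12 * (n:ℝ)) with hrdef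
  have hr0 : 0 ≤ r := by positivity
  have hr12 : r ≤ 1 / 12 := by
    rw [hrdef, div_le_div_iff₀ (by linarith) (by norm_num)]
    linarith
  have hr1 : r < 1 := by linarith
  have hA : ∀ k : ℕ, ‖ak a b n (k + 1) lam t‖ ≤ Q * r ^ (k + 1) :=
    fun k => ak_abs_le M a b n (k + 1) hn1 hnM lam hlam t ht1
  have hA' : ∀ k : ℕ, ‖ak' a b n (k + 1) lam t‖ ≤ Q * r ^ (k + 1) :=
    fun k => ak'_abs_le M a b n (k + 1) hn1 hnM lam hlam t ht1
  have hgeo : Summable (fun k : ℕ => r ^ k) := summable_geometric_of_lt_one hr0 hr1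
  have hS : Summable (fun k : ℕ => ‖ak a b n (k + 1) lam t‖) := by
    apply Summable.of_nonneg_of_le (fun k => norm_nonneg _)
      (fun k => le_trans (hA k) (le_of_eq (by rw [pow_succ]; ring))) (hgeo.mul_left (Q * r))
  have hS' : Summable (fun k : ℕ => ‖ak' a b n (k + 1) lam t‖) := by
    apply Summable.of_nonneg_of_le (fun k => norm_nonneg _)
      (fun k => le_trans (hA' k) (le_of_eq (by rw [pow_succ]; ring))) (hgeo.mul_left (Q * r))
  -- first-term bounds via cancellation
  have hcan := cancel_bound M hM n hn1 hnM lam hlam t htabs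
  have habQ : ‖a‖ * ‖b‖ ≤ Q * Q :=
    mul_le_mul (le_trans (le_max_left _ _) (le_max_left _ _))
      (le_trans (le_max_right _ _) (le_max_left _ _)) (norm_nonneg _) (by linarith)
  set C : ℝ := Q * Q * ((2 * M + 110) / (576 * (n:ℝ) ^ 2)) with hCdef
  have hCnn : 0 ≤ (2 * M + 110) / (576 * (n:ℝ) ^ 2) := by positivity
  have hone : ‖ak a b n 1 lam t‖ ≤ C := by
    rw [ak_one_eq, norm_mul, norm_mul]
    exact mul_le_mul habQ hcan (norm_nonneg _) (by nlinarith)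
  have hone' : ‖ak' a b n 1 lam t‖ ≤ C := by
    rw [ak'_one_eq, norm_mul, norm_mul]
    have hcan' : ‖denom' n lam t 1 + denom' n lam t (-1)‖
        ≤ (2 * M + 110) / (576 * (n:ℝ) ^ 2) := by
      rw [denom'_eq, denom'_eq]
      have := cancel_bound M hM n hn1 hnM lam hlam (-t) (by rwa [abs_neg])
      rw [add_comm] at this
      simpa using this
    exact mul_le_mul habQ hcan' (norm_nonneg _) (by nlinarith)
  -- final numeric bound
  have hfin : C + 2 * Q * r ^ 2 ≤ Q ^ 3 * (2 * M + 200) / (n:ℝ) ^ 2 := by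
    have hr2 : r ^ 2 = Q ^ 2 / 144 * ((n:ℝ) ^ 2)⁻¹ := by
      rw [hrdef]
      field_simp
      ring
    have hC2 : C = Q ^ 2 * ((2 * M + 110) / 576) * ((n:ℝ) ^ 2)⁻¹ := by
      rw [hCdef, div_eq_mul_inv, mul_inv]; ring
    have hQ23 : Q ^ 2 ≤ Q ^ 3 := by nlinarith
    have h1 : Q ^ 2 * (2 * M + 110) ≤ Q ^ 3 * (2 * M + 110) := by nlinarith
    have h2 : 0 ≤ Q ^ 3 * M := by positivity
    have hkey : Q ^ 2 * ((2 * M + 110) / 576) + 2 * Q * (Q ^ 2 / 144) ≤ Q ^ 3 * (2 * M + 200) := by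
      nlinarith
    rw [hC2, hr2, div_eq_mul_inv]
    calc Q ^ 2 * ((2 * M + 110) / 576) * ((n:ℝ) ^ 2)⁻¹ + 2 * Q * (Q ^ 2 / 144 * ((n:ℝ) ^ 2)⁻¹)
        = (Q ^ 2 * ((2 * M + 110) / 576) + 2 * Q * (Q ^ 2 / 144)) * ((n:ℝ) ^ 2)⁻¹ := by ring
      _ ≤ (Q ^ 3 * (2 * M + 200)) * ((n:ℝ) ^ 2)⁻¹ :=
          mul_le_mul_of_nonneg_right hkey (by positivity)
  refine ⟨hS, hS', ?_, ?_⟩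
  · calc ‖Afun a b n lam t‖
        ≤ C + 2 * Q * r ^ 2 :=
          series_bound _ Q r C (by linarith) hr0 hr12 hA hone
      _ ≤ _ := hfin
  · calc ‖A'fun a b n lam t‖
        ≤ C + 2 * Q * r ^ 2 :=
          series_bound _ Q r C (by linarith) hr0 hr12 hA' hone'
      _ ≤ _ := hfin
end

section
/- Let b ∈ ℂ and for an integer n ≥ 1 define f(λ) = b^{2n}·∏_{s=1}^{2n−1} (λ − (2π(n−s))²)^{−1} on a neighborhood of λ = (2πn)². Then f is complex differentiable at (2πn)² and f′((2πn)²) = −β_n·H_{2n−1}/(4π²n), where β_n = b^{2n}·((2π)^{2n−1}·(2n−1)!)^{−2} and H_{2n−1} = ∑_{j=1}^{2n−1} 1/j. -/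
open Finset

lemma aux_reflect_sum {M : Type*} [AddCommMonoid M] (n : ℕ) (g : ℕ → M) :
    ∑ s ∈ Finset.Icc 1 (2 * n - 1), g (2 * n - s)
      = ∑ s ∈ Finset.Icc 1 (2 * n - 1), g s := by
  refine Finset.sum_nbij' (fun s => 2 * n - s) (fun s => 2 * n - s) ?_ ?_ ?_ ?_
      (fun a _ => rfl) <;>
    · intro a ha
      simp only [Finset.mem_Icc] at ha ⊢
      omega

lemma aux_reflect_prod {M : Type*} [CommMonoid M] (n : ℕ) (g : ℕ → M) :
    ∏ s ∈ Finset.Icc 1 (2 * n - 1), g (2 * n - s)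
      = ∏ s ∈ Finset.Icc 1 (2 * n - 1), g s := by
  refine Finset.prod_nbij' (fun s => 2 * n - s) (fun s => 2 * n - s) ?_ ?_ ?_ ?_
      (fun a _ => rfl) <;>
    · intro a ha
      simp only [Finset.mem_Icc] at ha ⊢
      omega

lemma aux_prod_Icc_id (m : ℕ) : ∏ s ∈ Finset.Icc 1 m, s = m.factorial := by
  induction m with
  | zero => simp
  | succ k ih =>
      rw [show Finset.Icc 1 (k + 1) = insert (k + 1) (Finset.Icc 1 k) by
            ext x; simp only [Finset.mem_Icc, Finset.mem_insert]; omega,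
          Finset.prod_insert (by simp), ih, Nat.factorial_succ]

/-- The exact derivative of `b_{2n-1}(λ,0)` at `λ = (2πn)²` underlying (65)-(66):
`f'((2πn)²) = -β_n H_{2n-1}/(4π²n)`. -/
theorem stmt9 (b : ℂ) (n : ℕ) (hn : 1 ≤ n) :
    HasDerivAt
      (fun lam : ℂ => b ^ (2 * n) *
        ∏ s ∈ Finset.Icc 1 (2 * n - 1),
          (lam - (((2 * Real.pi * ((n : ℝ) - (s : ℝ))) ^ 2 : ℝ) : ℂ))⁻¹)
      (-(b ^ (2 * n) *
          (((((2 * Real.pi) ^ (2 * n - 1) * ((2 * n - 1).factorial : ℝ)) : ℝ) : ℂ) ^ 2)⁻¹) *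
        (((∑ j ∈ Finset.Icc 1 (2 * n - 1), (1 : ℝ) / (j : ℝ)) / (4 * Real.pi ^ 2 * (n : ℝ)) : ℝ) : ℂ))
      (((2 * Real.pi * (n : ℝ)) ^ 2 : ℝ) : ℂ) := by
  have hπ : (Real.pi : ℝ) ≠ 0 := Real.pi_ne_zero
  set I : Finset ℕ := Finset.Icc 1 (2 * n - 1) with hI
  set lam0 : ℂ := (((2 * Real.pi * (n : ℝ)) ^ 2 : ℝ) : ℂ) with hlam0
  set D : ℕ → ℝ := fun s => 4 * Real.pi ^ 2 * (s : ℝ) * (2 * (n : ℝ) - (s : ℝ)) with hD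
  have hmem : ∀ s ∈ I, 1 ≤ s ∧ s ≤ 2 * n - 1 := fun s hs => Finset.mem_Icc.mp hs
  have hDpos : ∀ s ∈ I, 0 < D s := by
    intro s hs
    obtain ⟨h1, h2⟩ := hmem s hs
    have hs0 : (0 : ℝ) < (s : ℝ) := by exact_mod_cast h1
    have hs2 : (s : ℝ) < 2 * (n : ℝ) := by
      have : s < 2 * n := by omega
      exact_mod_cast this
    have : (0 : ℝ) < 2 * (n : ℝ) - (s : ℝ) := by linarith
    positivity
  have hsub : ∀ s ∈ I,
      lam0 - (((2 * Real.pi * ((n : ℝ) - (s : ℝ))) ^ 2 : ℝ) : ℂ) = ((D s : ℝ) : ℂ) := by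
    intro s hs
    rw [hlam0, ← Complex.ofReal_sub]
    congr 1
    simp only [hD]
    ring
  -- derivative of each factor
  have hder : ∀ s ∈ I,
      HasDerivAt (fun lam : ℂ => (lam - (((2 * Real.pi * ((n : ℝ) - (s : ℝ))) ^ 2 : ℝ) : ℂ))⁻¹)
        (-(((D s : ℝ) : ℂ) ^ 2)⁻¹) lam0 := by
    intro s hs
    have hne : lam0 - (((2 * Real.pi * ((n : ℝ) - (s : ℝ))) ^ 2 : ℝ) : ℂ) ≠ 0 := by
      rw [hsub s hs]
      exact_mod_cast (hDpos s hs).ne'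
    have h1 : HasDerivAt (fun lam : ℂ => lam - (((2 * Real.pi * ((n : ℝ) - (s : ℝ))) ^ 2 : ℝ) : ℂ))
        1 lam0 := (hasDerivAt_id _).sub_const _
    have h2 := h1.inv hne
    refine h2.congr_deriv ?_
    rw [hsub s hs]
    field_simp
  have hprod := HasDerivAt.fun_finsetProd hder
  have hfull := hprod.const_mul (b ^ (2 * n))
  refine hfull.congr_deriv ?_
  symm
  -- now prove value equality
  -- rewrite erase products
  have hterm : ∀ s ∈ I,
      (∏ t ∈ I.erase s,
          (lam0 - (((2 * Real.pi * ((n : ℝ) - (t : ℝ))) ^ 2 : ℝ) : ℂ))⁻¹) •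
        (-(((D s : ℝ) : ℂ) ^ 2)⁻¹)
      = -((∏ t ∈ I, (((D t : ℝ) : ℂ))⁻¹) * (((D s : ℝ) : ℂ))⁻¹) := by
    intro s hs
    have hDs : ((D s : ℝ) : ℂ) ≠ 0 := by exact_mod_cast (hDpos s hs).ne'
    have hprod_congr : ∀ u : Finset ℕ, u ⊆ I →
        (∏ t ∈ u, (lam0 - (((2 * Real.pi * ((n : ℝ) - (t : ℝ))) ^ 2 : ℝ) : ℂ))⁻¹)
          = ∏ t ∈ u, (((D t : ℝ) : ℂ))⁻¹ := by
      intro u hu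
      exact Finset.prod_congr rfl fun t ht => by rw [hsub t (hu ht)]
    rw [hprod_congr _ (Finset.erase_subset s I)]
    have herase : (∏ t ∈ I.erase s, (((D t : ℝ) : ℂ))⁻¹)
        = (∏ t ∈ I, (((D t : ℝ) : ℂ))⁻¹) * ((D s : ℝ) : ℂ) := by
      have h := Finset.prod_erase_mul I (fun t => (((D t : ℝ) : ℂ))⁻¹) hs
      rw [← h, mul_assoc, inv_mul_cancel₀ hDs, mul_one]
    rw [herase, smul_eq_mul]
    have hkey : ((D s : ℝ) : ℂ) * (((D s : ℝ) : ℂ) * ((D s : ℝ) : ℂ))⁻¹ = (((D s : ℝ) : ℂ))⁻¹ := by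
      rw [mul_inv, ← mul_assoc, mul_inv_cancel₀ hDs, one_mul]
    rw [pow_two, mul_neg, mul_assoc, hkey]
  rw [Finset.sum_congr rfl hterm, Finset.sum_neg_distrib, ← Finset.mul_sum]
  -- closed forms for product and sum, at the real level
  have hcast2n : ∀ s ∈ I, (2 * (n : ℝ) - (s : ℝ)) = ((2 * n - s : ℕ) : ℝ) := by
    intro s hs
    obtain ⟨h1, h2⟩ := hmem s hs
    have : s ≤ 2 * n := by omega
    push_cast [Nat.cast_sub this]
    ring
  have hrefl_fact : ∏ s ∈ I, (2 * (n : ℝ) - (s : ℝ)) = ((2 * n - 1).factorial : ℝ) := by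
    rw [Finset.prod_congr rfl hcast2n, ← Nat.cast_prod]
    rw [hI, aux_reflect_prod n (fun j => j), aux_prod_Icc_id]
  have hP : ∏ s ∈ I, D s = ((2 * Real.pi) ^ (2 * n - 1) * ((2 * n - 1).factorial : ℝ)) ^ 2 := by
    simp only [hD]
    rw [show (fun s : ℕ => 4 * Real.pi ^ 2 * (s : ℝ) * (2 * (n : ℝ) - (s : ℝ)))
          = fun s : ℕ => ((2 * Real.pi) ^ 2 * (s : ℝ)) * (2 * (n : ℝ) - (s : ℝ)) by
          funext s; ring]
    rw [Finset.prod_mul_distrib, Finset.prod_mul_distrib, Finset.prod_const, hrefl_fact,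
        ← Nat.cast_prod, hI, aux_prod_Icc_id]
    rw [Nat.card_Icc]
    rw [show 2 * n - 1 + 1 - 1 = 2 * n - 1 by omega, ← pow_mul]
    ring
  have hS : ∑ s ∈ I, (D s)⁻¹
      = (∑ j ∈ I, (1 : ℝ) / (j : ℝ)) / (4 * Real.pi ^ 2 * (n : ℝ)) := by
    have hn0 : ((n : ℝ)) ≠ 0 := by positivity
    have step1 : ∀ s ∈ I, (D s)⁻¹
        = (1 / (8 * Real.pi ^ 2 * (n : ℝ))) * (1 / (s : ℝ) + 1 / (2 * (n : ℝ) - (s : ℝ))) := by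
      intro s hs
      obtain ⟨h1, h2⟩ := hmem s hs
      have hs0 : ((s : ℝ)) ≠ 0 := by
        have : (0 : ℝ) < (s : ℝ) := by exact_mod_cast h1
        linarith
      have hm0 : (2 * (n : ℝ) - (s : ℝ)) ≠ 0 := by
        have : s < 2 * n := by omega
        have : (s : ℝ) < 2 * (n : ℝ) := by exact_mod_cast this
        linarith
      simp only [hD]
      field_simp
      ring
    rw [Finset.sum_congr rfl step1, ← Finset.mul_sum, Finset.sum_add_distrib]
    have hrefl : ∑ s ∈ I, 1 / (2 * (n : ℝ) - (s : ℝ)) = ∑ j ∈ I, (1 : ℝ) / (j : ℝ) := by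
      rw [Finset.sum_congr rfl (fun s hs => by rw [hcast2n s hs])]
      rw [hI]
      exact aux_reflect_sum n (fun j => 1 / (j : ℝ))
    rw [hrefl]
    field_simp
    ring
  -- assemble
  have hPinv : ∏ t ∈ I, (((D t : ℝ) : ℂ))⁻¹
      = (((((2 * Real.pi) ^ (2 * n - 1) * ((2 * n - 1).factorial : ℝ)) : ℝ) : ℂ) ^ 2)⁻¹ := by
    rw [Finset.prod_inv_distrib, ← Complex.ofReal_prod, hP]
    push_cast
    ring
  have hSinv : ∑ s ∈ I, (((D s : ℝ) : ℂ))⁻¹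
      = (((∑ j ∈ I, (1 : ℝ) / (j : ℝ)) / (4 * Real.pi ^ 2 * (n : ℝ)) : ℝ) : ℂ) := by
    rw [show (fun s : ℕ => (((D s : ℝ) : ℂ))⁻¹) = fun s : ℕ => (((D s)⁻¹ : ℝ) : ℂ) by
          funext s; push_cast; ring]
    rw [← Complex.ofReal_sum, hS]
  rw [hPinv, hSinv]
  ring
end

section
/- Let b ∈ ℂ and set β_n = b^{2n}·((2π)^{2n−1}·(2n−1)!)^{−2}. For every M > 0 there exist K > 0 and N ∈ ℕ such that for all integers n > N, all t ∈ [0, n^{−3}], and all λ ∈ ℂ with |λ − (2πn)²| ≤ M·n^{−2}: |b^{2n}·∏_{s=1}^{2n−1} (λ − (2π(n−s) + t)²)^{−1} − β_n| ≤ K·|β_n|·n^{−2}. -/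
open Finset

lemma my_prod_sub_one_abs_le {ι : Type*} (S : Finset ι) (r : ι → ℂ) (η : ℝ) (hη : 0 ≤ η)
    (h : ∀ s ∈ S, ‖(r s - 1)‖ ≤ η) :
    ‖((∏ s ∈ S, r s) - 1)‖ ≤ (1 + η) ^ S.card - 1 := by
  induction S using Finset.cons_induction with
  | empty => simp
  | cons a S ha ih =>
    have ha1 : ‖(r a - 1)‖ ≤ η := h a (Finset.mem_cons_self a S)
    have hra : ‖(r a)‖ ≤ 1 + η := by
      calc ‖(r a)‖ = ‖(1 + (r a - 1))‖ := by ring_nf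
        _ ≤ ‖(1:ℂ)‖ + ‖(r a - 1)‖ := norm_add_le _ _
        _ ≤ 1 + η := by simpa using ha1
    have ihS := ih (fun s hs => h s (Finset.mem_cons_of_mem hs))
    have hpow : (0:ℝ) ≤ (1 + η) ^ S.card - 1 := by
      have : (1:ℝ) ≤ (1 + η) ^ S.card := one_le_pow₀ (by linarith)
      linarith
    rw [Finset.prod_cons, Finset.card_cons]
    calc ‖(r a * ∏ s ∈ S, r s - 1)‖
        = ‖(r a * ((∏ s ∈ S, r s) - 1) + (r a - 1))‖ := by ring_nf
      _ ≤ ‖(r a * ((∏ s ∈ S, r s) - 1))‖ + ‖(r a - 1)‖ :=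
          norm_add_le _ _
      _ = ‖(r a)‖ * ‖((∏ s ∈ S, r s) - 1)‖ + ‖(r a - 1)‖ := by
          rw [norm_mul]
      _ ≤ (1 + η) * ((1 + η) ^ S.card - 1) + η := by
          have := mul_le_mul hra ihS (norm_nonneg _) (by linarith)
          linarith
      _ = (1 + η) ^ (S.card + 1) - 1 := by rw [pow_succ]; ring

lemma my_prod_inv_est {ι : Type*} (S : Finset ι) (z w : ι → ℂ) (ε : ℝ) (hε0 : 0 ≤ ε)
    (hε : ε ≤ 1 / 2) (hw : ∀ s ∈ S, w s ≠ 0)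
    (h : ∀ s ∈ S, ‖(z s - w s)‖ ≤ ε * ‖(w s)‖) :
    ‖((∏ s ∈ S, (z s)⁻¹) - (∏ s ∈ S, w s)⁻¹)‖
      ≤ ‖((∏ s ∈ S, w s)⁻¹)‖ * ((1 + 2 * ε) ^ S.card - 1) := by
  have hzlb : ∀ s ∈ S, ‖(w s)‖ / 2 ≤ ‖(z s)‖ := by
    intro s hs
    have h1 : ‖(w s)‖ ≤ ‖(z s)‖ + ‖(z s - w s)‖ := by
      calc ‖(w s)‖ = ‖(z s - (z s - w s))‖ := by ring_nf
        _ ≤ ‖(z s)‖ + ‖(z s - w s)‖ := by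
            rw [sub_eq_add_neg]
            exact (norm_add_le _ _).trans (by rw [norm_neg])
    have := h s hs
    nlinarith [norm_nonneg (w s)]
  have hwpos : ∀ s ∈ S, 0 < ‖(w s)‖ := by
    intro s hs; exact norm_pos_iff.mpr (hw s hs)
  have hzne : ∀ s ∈ S, z s ≠ 0 := by
    intro s hs
    have h1 := hzlb s hs; have h2 := hwpos s hs
    exact norm_pos_iff.mp (by linarith)
  have hr : ∀ s ∈ S, ‖(w s * (z s)⁻¹ - 1)‖ ≤ 2 * ε := by
    intro s hs
    have hzne' := hzne s hs
    have heq : w s * (z s)⁻¹ - 1 = (w s - z s) * (z s)⁻¹ := by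
      field_simp
    rw [heq, norm_mul, norm_inv]
    have h1 : ‖(w s - z s)‖ ≤ ε * ‖(w s)‖ := by
      rw [show w s - z s = -(z s - w s) by ring, norm_neg]
      exact h s hs
    have hwp := hwpos s hs
    have h2 : (‖(z s)‖)⁻¹ ≤ (‖(w s)‖ / 2)⁻¹ :=
      inv_anti₀ (by linarith) (hzlb s hs)
    calc ‖(w s - z s)‖ * (‖(z s)‖)⁻¹
        ≤ (ε * ‖(w s)‖) * (‖(w s)‖ / 2)⁻¹ :=
          mul_le_mul h1 h2 (by positivity) (by positivity)
      _ = 2 * ε := by field_simp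
  have hcard := my_prod_sub_one_abs_le S (fun s => w s * (z s)⁻¹) (2 * ε) (by linarith) hr
  have hWne : (∏ s ∈ S, w s) ≠ 0 := Finset.prod_ne_zero_iff.mpr hw
  have hfact : (∏ s ∈ S, (z s)⁻¹) - (∏ s ∈ S, w s)⁻¹
      = (∏ s ∈ S, w s)⁻¹ * ((∏ s ∈ S, w s * (z s)⁻¹) - 1) := by
    rw [Finset.prod_mul_distrib, mul_sub, ← mul_assoc, inv_mul_cancel₀ hWne, one_mul, mul_one]
  rw [hfact, norm_mul]
  exact mul_le_mul_of_nonneg_left hcard (norm_nonneg _)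

set_option maxHeartbeats 1000000 in
/-- Formula (67): uniformly for `t ∈ [0, n⁻³]` and `|λ - (2πn)²| ≤ M n⁻²`,
`b_{2n-1}(λ,t) = β_n (1 + O(n⁻²))` where `β_n = b^{2n}((2π)^{2n-1}(2n-1)!)⁻²`. -/
theorem stmt10 (b : ℂ) (M : ℝ) (hM : 0 < M) :
    ∃ K : ℝ, 0 < K ∧ ∃ N : ℕ, ∀ n : ℕ, N < n →
      ∀ t : ℝ, t ∈ Set.Icc (0 : ℝ) (((n : ℝ) ^ 3)⁻¹) →
      ∀ lam : ℂ, ‖(lam - (((2 * Real.pi * (n : ℝ)) ^ 2 : ℝ) : ℂ))‖ ≤ M * ((n : ℝ) ^ 2)⁻¹ →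
        ‖(b ^ (2 * n) *
              (∏ s ∈ Finset.Icc 1 (2 * n - 1),
                (lam - (((2 * Real.pi * ((n : ℝ) - (s : ℝ)) + t) ^ 2 : ℝ) : ℂ))⁻¹) -
              b ^ (2 * n) *
                (((((2 * Real.pi) ^ (2 * n - 1) * ((2 * n - 1).factorial : ℝ)) : ℝ) : ℂ) ^ 2)⁻¹)‖ ≤
          K * ‖(b ^ (2 * n) *
                (((((2 * Real.pi) ^ (2 * n - 1) * ((2 * n - 1).factorial : ℝ)) : ℝ) : ℂ) ^ 2)⁻¹)‖ *
            ((n : ℝ) ^ 2)⁻¹ := by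
  have hπ : (3:ℝ) ≤ Real.pi := Real.pi_gt_three.le
  set c : ℝ := M + 4 * Real.pi + 1 with hcdef
  have hc0 : 0 < c := by positivity
  refine ⟨8 * c, by positivity, ⌈4 * c⌉₊ + 1, ?_⟩
  intro n hn t ht lam hlam
  obtain ⟨ht0, ht1⟩ := ht
  have hn2 : 2 ≤ n := by
    have : 1 ≤ ⌈4 * c⌉₊ := Nat.one_le_ceil_iff.mpr (by linarith)
    omega
  have hnR : (2:ℝ) ≤ (n:ℝ) := by exact_mod_cast hn2
  have hn4c : 4 * c < (n:ℝ) := by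
    have h1 : ((⌈4*c⌉₊ : ℕ) : ℝ) < (n:ℝ) := by exact_mod_cast (by omega : ⌈4*c⌉₊ < n)
    calc 4*c ≤ (⌈4*c⌉₊ : ℝ) := Nat.le_ceil _
      _ < (n:ℝ) := h1
  have hnpos : (0:ℝ) < (n:ℝ) := by linarith
  set m := 2 * n - 1 with hm
  have hmR : (m : ℝ) = 2 * (n:ℝ) - 1 := by
    rw [hm, Nat.cast_sub (by omega)]; push_cast; ring
  -- products
  set z : ℕ → ℂ := fun s => lam - (((2 * Real.pi * ((n : ℝ) - (s : ℝ)) + t) ^ 2 : ℝ) : ℂ) with hzdef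
  set W : ℕ → ℝ := fun s => (2*Real.pi)^2 * (s:ℝ) * (2*(n:ℝ) - (s:ℝ)) with hWdef
  -- product of W
  have hprod1 : ∏ s ∈ Icc 1 m, (s:ℝ) = (Nat.factorial m : ℝ) := by
    rw [← Nat.cast_prod]
    norm_cast
    rw [← Finset.Ico_add_one_right_eq_Icc, Finset.prod_Ico_id_eq_factorial]
  have hprod2 : ∏ s ∈ Icc 1 m, (2*(n:ℝ) - (s:ℝ)) = (Nat.factorial m : ℝ) := by
    rw [← hprod1]
    apply Finset.prod_nbij' (fun s => 2 * n - s) (fun s => 2 * n - s)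
    · intro a haa; rw [Finset.mem_Icc] at *; omega
    · intro a haa; rw [Finset.mem_Icc] at *; omega
    · intro a haa; rw [Finset.mem_Icc] at haa; omega
    · intro a haa; rw [Finset.mem_Icc] at haa; omega
    · intro a haa
      rw [Finset.mem_Icc] at haa
      rw [Nat.cast_sub (by omega)]
      push_cast; ring
  have hcard : (Icc 1 m).card = m := by simp [Nat.card_Icc]
  have hprodW : ∏ s ∈ Icc 1 m, W s = ((2*Real.pi)^m * (Nat.factorial m : ℝ))^2 := by
    simp only [hWdef]
    rw [Finset.prod_mul_distrib, Finset.prod_mul_distrib, hprod1, hprod2,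
      Finset.prod_const, hcard]
    rw [show ((2*Real.pi)^2)^m = (2*Real.pi)^(2*m) from (pow_mul _ 2 m).symm,
      show ((2*Real.pi)^m * (Nat.factorial m : ℝ))^2 = ((2*Real.pi)^m)^2 * (Nat.factorial m : ℝ)^2
        from mul_pow _ _ 2,
      show ((2*Real.pi)^m)^2 = (2*Real.pi)^(m*2) from (pow_mul _ m 2).symm,
      mul_comm 2 m]
    ring
  have hprodWC : ∏ s ∈ Icc 1 m, ((W s : ℝ) : ℂ)
      = ((((2*Real.pi)^m * (Nat.factorial m : ℝ)) : ℝ) : ℂ)^2 := by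
    rw [← Complex.ofReal_prod, hprodW]
    push_cast; ring
  -- per-factor lower bound for W
  have hWlb : ∀ s ∈ Icc 1 m, (n:ℝ) ≤ W s := by
    intro s hs
    rw [Finset.mem_Icc] at hs
    have hs1 : (1:ℝ) ≤ (s:ℝ) := by exact_mod_cast hs.1
    have hs2 : (s:ℝ) ≤ 2*(n:ℝ) - 1 := by
      rw [← hmR]; exact_mod_cast hs.2
    simp only [hWdef]
    have hX : 2*(n:ℝ) - 1 ≤ (s:ℝ) * (2*(n:ℝ) - (s:ℝ)) := by
      nlinarith [mul_nonneg (by linarith : (0:ℝ) ≤ (s:ℝ) - 1)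
        (by linarith : (0:ℝ) ≤ 2*(n:ℝ) - 1 - (s:ℝ))]
    have hpi2 : (1:ℝ) ≤ (2*Real.pi)^2 := by nlinarith
    nlinarith [hX, hpi2, mul_nonneg (by linarith : (0:ℝ) ≤ (s:ℝ))
      (by linarith : (0:ℝ) ≤ 2*(n:ℝ) - (s:ℝ))]
  -- per-factor closeness
  have hts : t ≤ ((n:ℝ)^3)⁻¹ := ht1
  have hn3pos : (0:ℝ) < (n:ℝ)^3 := by positivity
  have hzw : ∀ s ∈ Icc 1 m, ‖(z s - ((W s : ℝ):ℂ))‖ ≤ c * ((n:ℝ)^2)⁻¹ := by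
    intro s hs
    rw [Finset.mem_Icc] at hs
    have hs1 : (1:ℝ) ≤ (s:ℝ) := by exact_mod_cast hs.1
    have hs2 : (s:ℝ) ≤ 2*(n:ℝ) - 1 := by
      rw [← hmR]; exact_mod_cast hs.2
    have key : z s - ((W s : ℝ):ℂ)
        = (lam - (((2 * Real.pi * (n : ℝ)) ^ 2 : ℝ) : ℂ))
          - (((4*Real.pi*((n:ℝ)-(s:ℝ))*t + t^2) : ℝ) : ℂ) := by
      simp only [hzdef, hWdef]
      push_cast; ring
    rw [key]
    have h1 : ‖((((4*Real.pi*((n:ℝ)-(s:ℝ))*t + t^2) : ℝ) : ℂ))‖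
        = |4*Real.pi*((n:ℝ)-(s:ℝ))*t + t^2| := by rw [Complex.norm_real, Real.norm_eq_abs]
    have habs : |4*Real.pi*((n:ℝ)-(s:ℝ))*t + t^2| ≤ (4*Real.pi + 1) * ((n:ℝ)^2)⁻¹ := by
      have hd : |(n:ℝ) - (s:ℝ)| ≤ (n:ℝ) := by
        rw [abs_le]; constructor <;> linarith
      have ht2 : t^2 ≤ ((n:ℝ)^2)⁻¹ := by
        have : t ≤ 1 := by
          calc t ≤ ((n:ℝ)^3)⁻¹ := hts
            _ ≤ 1 := by rw [inv_le_one_iff₀]; right; nlinarith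
        have h3 : t^2 ≤ t := by nlinarith
        have h4 : ((n:ℝ)^3)⁻¹ ≤ ((n:ℝ)^2)⁻¹ := by
          apply inv_anti₀ (by positivity); nlinarith
        linarith
      have hcross : |4*Real.pi*((n:ℝ)-(s:ℝ))*t| ≤ 4*Real.pi*((n:ℝ)^2)⁻¹ := by
        rw [abs_mul, abs_mul]
        have e1 : |4*Real.pi| = 4*Real.pi := abs_of_pos (by positivity)
        have e2 : |t| = t := abs_of_nonneg ht0
        rw [e1, e2]
        have : |(n:ℝ) - (s:ℝ)| * t ≤ (n:ℝ) * ((n:ℝ)^3)⁻¹ :=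
          mul_le_mul hd hts ht0 (by positivity)
        have e3 : (n:ℝ) * ((n:ℝ)^3)⁻¹ = ((n:ℝ)^2)⁻¹ := by
          field_simp
        rw [e3] at this
        nlinarith
      calc |4*Real.pi*((n:ℝ)-(s:ℝ))*t + t^2| ≤ |4*Real.pi*((n:ℝ)-(s:ℝ))*t| + |t^2| := abs_add_le _ _
        _ ≤ 4*Real.pi*((n:ℝ)^2)⁻¹ + t^2 := by rw [abs_of_nonneg (sq_nonneg t)]; linarith
        _ ≤ (4*Real.pi + 1) * ((n:ℝ)^2)⁻¹ := by linarith
    calc ‖_‖ ≤ ‖(lam - (((2 * Real.pi * (n : ℝ)) ^ 2 : ℝ) : ℂ))‖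
          + ‖((((4*Real.pi*((n:ℝ)-(s:ℝ))*t + t^2) : ℝ) : ℂ))‖ := by
            rw [sub_eq_add_neg]
            exact (norm_add_le _ _).trans (by rw [norm_neg])
      _ ≤ M * ((n:ℝ)^2)⁻¹ + (4*Real.pi + 1) * ((n:ℝ)^2)⁻¹ := by
            rw [h1]; exact add_le_add hlam habs
      _ = c * ((n:ℝ)^2)⁻¹ := by rw [hcdef]; ring
  -- apply the product estimate with ε = c / n^3
  set ε : ℝ := c / (n:ℝ)^3 with hεdef
  have hε0 : 0 ≤ ε := by positivity
  have hε12 : ε ≤ 1/2 := by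
    rw [hεdef, div_le_iff₀ hn3pos]; nlinarith
  have hwne : ∀ s ∈ Icc 1 m, ((W s : ℝ):ℂ) ≠ 0 := by
    intro s hs
    have := hWlb s hs
    simp only [ne_eq, Complex.ofReal_eq_zero]
    linarith
  have hfac : ∀ s ∈ Icc 1 m, ‖(z s - ((W s:ℝ):ℂ))‖ ≤ ε * ‖((W s:ℝ):ℂ)‖ := by
    intro s hs
    have h1 := hzw s hs
    have h2 := hWlb s hs
    have h3 : ‖((W s:ℝ):ℂ)‖ = W s := by
      rw [Complex.norm_real, Real.norm_eq_abs, abs_of_nonneg (by linarith)]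
    rw [h3]
    calc ‖(z s - ((W s:ℝ):ℂ))‖ ≤ c * ((n:ℝ)^2)⁻¹ := h1
      _ = ε * (n:ℝ) := by rw [hεdef]; field_simp
      _ ≤ ε * W s := by nlinarith
  have hest := my_prod_inv_est (Icc 1 m) z (fun s => ((W s:ℝ):ℂ)) ε hε0 hε12 hwne hfac
  rw [hcard] at hest
  -- bound (1+2ε)^m - 1 ≤ 8c/n^2
  have hy : (1 + 2*ε)^m - 1 ≤ 8 * c * ((n:ℝ)^2)⁻¹ := by
    set y : ℝ := 4 * c / (n:ℝ)^2 with hydef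
    have hy0 : 0 ≤ y := by positivity
    have hy1 : y ≤ 1 := by
      rw [hydef, div_le_one (by positivity)]; nlinarith
    have hme : (1 + 2*ε)^m ≤ Real.exp ((m:ℝ) * (2*ε)) := by
      calc (1 + 2*ε)^m ≤ (Real.exp (2*ε))^m := by
            apply pow_le_pow_left₀ (by linarith)
            linarith [Real.add_one_le_exp (2*ε)]
        _ = Real.exp ((m:ℝ) * (2*ε)) := (Real.exp_nat_mul _ _).symm
    have hmy : (m:ℝ) * (2*ε) ≤ y := by
      calc (m:ℝ) * (2*ε) ≤ (2*(n:ℝ)) * (2*ε) := by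
            apply mul_le_mul_of_nonneg_right _ (by positivity)
            rw [hmR]; linarith
        _ = y := by rw [hεdef, hydef]; field_simp; ring
    have hexp : Real.exp y ≤ 1 + 2*y := by
      have h := Real.exp_bound' hy0 hy1 (n := 1) one_pos
      norm_num [Finset.sum_range_one] at h
      linarith
    have : (1 + 2*ε)^m ≤ 1 + 2*y := by
      calc (1 + 2*ε)^m ≤ Real.exp ((m:ℝ) * (2*ε)) := hme
        _ ≤ Real.exp y := Real.exp_le_exp.mpr hmy
        _ ≤ 1 + 2*y := hexp
    have : (1 + 2*ε)^m - 1 ≤ 2*y := by linarith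
    calc (1 + 2*ε)^m - 1 ≤ 2*y := this
      _ = 8 * c * ((n:ℝ)^2)⁻¹ := by rw [hydef]; field_simp; ring
  -- assemble
  have hQ : (((((2 * Real.pi) ^ m * ((Nat.factorial m : ℕ) : ℝ)) : ℝ) : ℂ) ^ 2)⁻¹
      = (∏ s ∈ Icc 1 m, ((W s:ℝ):ℂ))⁻¹ := by rw [hprodWC]
  calc ‖(b ^ (2*n) * (∏ s ∈ Icc 1 m, (z s)⁻¹)
          - b ^ (2*n) * (((((2 * Real.pi) ^ m * ((Nat.factorial m : ℕ) : ℝ)) : ℝ) : ℂ) ^ 2)⁻¹)‖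
      = ‖(b ^ (2*n))‖ * ‖((∏ s ∈ Icc 1 m, (z s)⁻¹)
          - (∏ s ∈ Icc 1 m, ((W s:ℝ):ℂ))⁻¹)‖ := by
        rw [hQ, ← mul_sub, norm_mul]
    _ ≤ ‖(b ^ (2*n))‖ * (‖((∏ s ∈ Icc 1 m, ((W s:ℝ):ℂ))⁻¹)‖
          * ((1 + 2*ε)^m - 1)) := by
        exact mul_le_mul_of_nonneg_left hest (norm_nonneg _)
    _ ≤ ‖(b ^ (2*n))‖ * (‖((∏ s ∈ Icc 1 m, ((W s:ℝ):ℂ))⁻¹)‖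
          * (8 * c * ((n:ℝ)^2)⁻¹)) := by
        apply mul_le_mul_of_nonneg_left _ (norm_nonneg _)
        exact mul_le_mul_of_nonneg_left hy (norm_nonneg _)
    _ = 8 * c * ‖(b ^ (2*n)
          * (((((2 * Real.pi) ^ m * ((Nat.factorial m : ℕ) : ℝ)) : ℝ) : ℂ) ^ 2)⁻¹)‖
          * ((n:ℝ)^2)⁻¹ := by
        rw [hQ, norm_mul]; ring
end

section
/- For every M > 0 there exist K > 0 and N ∈ ℕ such that for all integers n > N, all t ∈ [0, n^{−3}], and all λ ∈ ℂ with |λ − (2πn)²| ≤ M/n: ∑_{s=2}^{2n−1} (|λ − (2π(n−s+1) + t)²|·|λ − (2π(n−s) + t)²|)^{−1} ≤ K/n². -/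
open Finset

set_option maxHeartbeats 1000000

lemma aux_sum_inv_sq (m : ℕ) : ∑ j ∈ Finset.range m, (((j:ℝ)+1)^2)⁻¹ ≤ 2 - 2/((m:ℝ)+1) := by
  induction m with
  | zero => norm_num
  | succ k ih =>
    rw [Finset.sum_range_succ]
    have hk : (0:ℝ) < (k:ℝ)+1 := by positivity
    have hk2 : (0:ℝ) < (k:ℝ)+2 := by positivity
    have h1 : (((k:ℝ)+1)^2)⁻¹ ≤ 2/((k:ℝ)+1) - 2/((k:ℝ)+2) := by
      rw [div_sub_div _ _ (ne_of_gt hk) (ne_of_gt hk2), inv_eq_one_div,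
        div_le_div_iff₀ (by positivity) (by positivity)]
      nlinarith
    have h2 : ((k:ℝ)+1)+1 = (k:ℝ)+2 := by ring
    push_cast
    rw [h2]
    linarith

lemma aux_sum_inv_sq' (m : ℕ) : ∑ j ∈ Finset.range m, (((j:ℝ)+1)^2)⁻¹ ≤ 2 := by
  have h : (0:ℝ) < (m:ℝ)+1 := by positivity
  have h2 : 0 ≤ 2/((m:ℝ)+1) := by positivity
  linarith [aux_sum_inv_sq m]

lemma aux_sum_reflect (m : ℕ) : ∑ j ∈ Finset.range m, (((m:ℝ)-(j:ℝ))^2)⁻¹ ≤ 2 := by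
  have h := Finset.sum_range_reflect (fun j => (((j:ℝ)+1)^2)⁻¹) m
  have heq : ∑ j ∈ Finset.range m, (((m:ℝ)-(j:ℝ))^2)⁻¹
      = ∑ j ∈ Finset.range m, ((((m - 1 - j : ℕ):ℝ)+1)^2)⁻¹ := by
    apply Finset.sum_congr rfl
    intro j hj
    have hj' : j < m := Finset.mem_range.mp hj
    have h2 : m - 1 - j = m - (j+1) := by omega
    have h3 : ((m - (j+1) : ℕ):ℝ) = (m:ℝ) - ((j:ℝ)+1) := by
      rw [Nat.cast_sub hj']; push_cast; ring
    rw [h2, h3]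
    ring_nf
  rw [heq]
  rw [h]
  exact aux_sum_inv_sq' m

lemma aux_core (a c : ℝ) (ha : 1 ≤ a) (hc : 1 ≤ c) :
    ((a*c)^2)⁻¹ ≤ 2/((a+c)^2) * ((a^2)⁻¹ + (c^2)⁻¹) := by
  have ha0 : (0:ℝ) < a := by linarith
  have hc0 : (0:ℝ) < c := by linarith
  rw [div_mul_eq_mul_div, le_div_iff₀ (by positivity)]
  have h1 : (a^2)⁻¹ + (c^2)⁻¹ = (a^2+c^2)/(a^2*c^2) := by field_simp; ring
  rw [h1, inv_eq_one_div, mul_pow, div_mul_eq_mul_div, mul_div_assoc, one_mul,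
    mul_div_assoc']
  gcongr
  nlinarith [sq_nonneg (a-c)]

/-- The estimate in the proof of formula (70): for `t ∈ [0, n⁻³]` and
`|λ - (2πn)²| ≤ M/n`, the sum `∑_{s=2}^{2n-1} (|λ - (2π(n-s+1)+t)²|·|λ - (2π(n-s)+t)²|)⁻¹`
is `O(n⁻²)`. -/
theorem stmt11 (M : ℝ) (hM : 0 < M) :
    ∃ K : ℝ, 0 < K ∧ ∃ N : ℕ, ∀ n : ℕ, N < n →
      ∀ t : ℝ, t ∈ Set.Icc (0 : ℝ) (((n : ℝ) ^ 3)⁻¹) →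
      ∀ lam : ℂ, Norm.norm (lam - (((2 * Real.pi * (n : ℝ)) ^ 2 : ℝ) : ℂ)) ≤ M / n →
        ∑ s ∈ Finset.Icc 2 (2 * n - 1),
            (Norm.norm (lam - (((2 * Real.pi * ((n : ℝ) - (s : ℝ) + 1) + t) ^ 2 : ℝ) : ℂ)) *
              Norm.norm (lam - (((2 * Real.pi * ((n : ℝ) - (s : ℝ)) + t) ^ 2 : ℝ) : ℂ)))⁻¹ ≤
          K / (n : ℝ) ^ 2 := by
  refine ⟨8, by norm_num, Nat.ceil M + 21, ?_⟩
  intro n hn t ht lam hlam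
  obtain ⟨ht0, ht1⟩ := ht
  have hn21 : 21 ≤ n := by
    have := Nat.le_ceil M
    omega
  have hnR : (21:ℝ) ≤ (n:ℝ) := by exact_mod_cast hn21
  have hnM : M + 21 ≤ (n:ℝ) := by
    have h1 : Nat.ceil M + 21 ≤ n := hn.le
    have h2 : ((Nat.ceil M + 21 : ℕ):ℝ) ≤ (n:ℝ) := by exact_mod_cast h1
    have h3 := Nat.le_ceil M
    push_cast at h2
    linarith
  have hπ3 : (3:ℝ) < Real.pi := Real.pi_gt_three
  have hπ4 : Real.pi ≤ 4 := Real.pi_le_four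
  have hn0 : (0:ℝ) < (n:ℝ) := by linarith
  have hπ2 : (9:ℝ) ≤ Real.pi^2 := by nlinarith
  -- key lower bound
  have key : ∀ j : ℝ, |j| ≤ (n:ℝ) - 1 →
      2*Real.pi^2*((n:ℝ)^2 - j^2) ≤ Norm.norm (lam - (((2*Real.pi*j + t)^2 : ℝ) : ℂ)) := by
    intro j hj
    obtain ⟨hjl, hjr⟩ := abs_le.mp hj
    set x : ℝ := (2*Real.pi*j + t)^2 with hx
    set P : ℝ := (2 * Real.pi * (n:ℝ))^2 with hP
    have htri : Norm.norm ((P:ℂ) - (x:ℂ)) ≤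
        Norm.norm ((P:ℂ) - lam) + Norm.norm (lam - (x:ℂ)) :=
      norm_sub_le_norm_sub_add_norm_sub _ _ _
    have habs : Norm.norm ((P:ℂ) - lam) ≤ M / n := by
      rw [norm_sub_rev]; exact hlam
    have hre : Norm.norm ((P:ℂ) - (x:ℂ)) = |P - x| := by
      rw [← Complex.ofReal_sub, Complex.norm_real, Real.norm_eq_abs]
    have hnt : (n:ℝ) * t ≤ 1/16 := by
      have h1 : (n:ℝ) * t ≤ (n:ℝ) * ((n:ℝ)^3)⁻¹ :=
        mul_le_mul_of_nonneg_left ht1 (le_of_lt hn0)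
      have h2 : (n:ℝ) * ((n:ℝ)^3)⁻¹ = ((n:ℝ)^2)⁻¹ := by
        field_simp
      have h3 : ((n:ℝ)^2)⁻¹ ≤ 1/16 := by
        rw [inv_le_iff_one_le_mul₀ (by positivity)]; nlinarith
      linarith [h1, h2.le, h2.ge, h3]
    have ht2 : t ≤ 1 := by nlinarith
    have e1 : 4*Real.pi*j*t ≤ 1 := by
      rcases le_or_gt (j*t) 0 with h | h
      · nlinarith
      · have hjt : j*t ≤ (n:ℝ)*t := by nlinarith
        nlinarith
    have e2 : t^2 ≤ 1 := by nlinarith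
    have e3 : M/n ≤ 1 := by
      rw [div_le_one hn0]; linarith
    have hj2 : j^2 ≤ ((n:ℝ)-1)^2 := sq_le_sq' hjl hjr
    have hd : (41:ℝ) ≤ (n:ℝ)^2 - j^2 := by nlinarith
    have e4 : (3:ℝ) ≤ 2*Real.pi^2*((n:ℝ)^2 - j^2) := by
      have h9 := mul_le_mul hπ2 hd (by norm_num) (by positivity)
      linarith
    have hlow : 2*Real.pi^2*((n:ℝ)^2 - j^2) + M/n ≤ P - x := by
      rw [hx, hP]; nlinarith
    have habs2 : P - x ≤ |P - x| := le_abs_self _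
    rw [hre] at htri
    linarith
  -- per-term bound
  have hterm : ∀ s ∈ Finset.Icc 2 (2 * n - 1),
      (Norm.norm (lam - (((2 * Real.pi * ((n : ℝ) - (s : ℝ) + 1) + t) ^ 2 : ℝ) : ℂ)) *
        Norm.norm (lam - (((2 * Real.pi * ((n : ℝ) - (s : ℝ)) + t) ^ 2 : ℝ) : ℂ)))⁻¹ ≤
      2/((2*(n:ℝ)-1)^2) * ((((s:ℝ)-1)^2)⁻¹ + ((2*(n:ℝ)-(s:ℝ))^2)⁻¹) := by
    intro s hs
    obtain ⟨hs2, hs3⟩ := Finset.mem_Icc.mp hs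
    have hs2R : (2:ℝ) ≤ (s:ℝ) := by exact_mod_cast hs2
    have hs3R : (s:ℝ) ≤ 2*(n:ℝ) - 1 := by
      have h1 : s + 1 ≤ 2*n := by omega
      have h2 := (Nat.cast_le (α := ℝ)).mpr h1
      push_cast at h2
      linarith
    set a : ℝ := (s:ℝ) - 1 with hA
    set c : ℝ := 2*(n:ℝ) - (s:ℝ) with hC
    have ha : 1 ≤ a := by simp [hA]; linarith
    have hc : 1 ≤ c := by simp [hC]; linarith
    have k1 := key ((n:ℝ) - (s:ℝ) + 1) (abs_le.mpr ⟨by linarith, by linarith⟩)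
    have k2 := key ((n:ℝ) - (s:ℝ)) (abs_le.mpr ⟨by linarith, by linarith⟩)
    have hA1 : a*c ≤ (n:ℝ)^2 - ((n:ℝ) - (s:ℝ) + 1)^2 := by nlinarith
    have hA2 : a*c ≤ (n:ℝ)^2 - ((n:ℝ) - (s:ℝ))^2 := by nlinarith
    have hac1 : (1:ℝ) ≤ a*c := by nlinarith
    set B1 := Norm.norm (lam - (((2 * Real.pi * ((n : ℝ) - (s : ℝ) + 1) + t) ^ 2 : ℝ) : ℂ))
    set B2 := Norm.norm (lam - (((2 * Real.pi * ((n : ℝ) - (s : ℝ)) + t) ^ 2 : ℝ) : ℂ))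
    have hb1 : a*c ≤ B1 := by nlinarith
    have hb2 : a*c ≤ B2 := by nlinarith
    have hprod : (a*c)^2 ≤ B1 * B2 := by nlinarith
    have hstep : (B1 * B2)⁻¹ ≤ ((a*c)^2)⁻¹ :=
      inv_anti₀ (by positivity) hprod
    calc (B1*B2)⁻¹ ≤ ((a*c)^2)⁻¹ := hstep
      _ ≤ 2/((a+c)^2) * ((a^2)⁻¹ + (c^2)⁻¹) := aux_core a c ha hc
      _ = 2/((2*(n:ℝ)-1)^2) * ((((s:ℝ)-1)^2)⁻¹ + ((2*(n:ℝ)-(s:ℝ))^2)⁻¹) := by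
          have h : a + c = 2*(n:ℝ) - 1 := by rw [hA, hC]; ring
          rw [h, hA, hC]
  -- the two partial sums
  have hicc : Finset.Icc 2 (2*n-1) = Finset.Ico 2 (2*n) := by
    rw [← Finset.Ico_add_one_right_eq_Icc]
    congr 1
    omega
  have hm : 2*n - 2 = 2*n - 2 := rfl
  have hsum1 : ∑ s ∈ Finset.Icc 2 (2*n-1), (((s:ℝ)-1)^2)⁻¹ ≤ 2 := by
    rw [hicc, Finset.sum_Ico_eq_sum_range]
    have heq : ∑ i ∈ Finset.range (2*n - 2), ((((2+i : ℕ):ℝ)-1)^2)⁻¹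
        = ∑ i ∈ Finset.range (2*n - 2), (((i:ℝ)+1)^2)⁻¹ := by
      apply Finset.sum_congr rfl
      intro i _
      push_cast
      ring_nf
    rw [heq]
    exact aux_sum_inv_sq' _
  have hsum2 : ∑ s ∈ Finset.Icc 2 (2*n-1), ((2*(n:ℝ)-(s:ℝ))^2)⁻¹ ≤ 2 := by
    rw [hicc, Finset.sum_Ico_eq_sum_range]
    have heq : ∑ i ∈ Finset.range (2*n - 2), ((2*(n:ℝ)-((2+i : ℕ):ℝ))^2)⁻¹
        = ∑ i ∈ Finset.range (2*n - 2), ((((2*n-2 : ℕ):ℝ)-(i:ℝ))^2)⁻¹ := by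
      apply Finset.sum_congr rfl
      intro i _
      have h22 : ((2*n-2 : ℕ):ℝ) = 2*(n:ℝ) - 2 := by
        have : 2 ≤ 2*n := by omega
        rw [Nat.cast_sub this]; push_cast; ring
      rw [h22]
      push_cast
      ring_nf
    rw [heq]
    exact aux_sum_reflect _
  -- combine
  have hC0 : (0:ℝ) ≤ 2/((2*(n:ℝ)-1)^2) := by positivity
  calc ∑ s ∈ Finset.Icc 2 (2 * n - 1),
        (Norm.norm (lam - (((2 * Real.pi * ((n : ℝ) - (s : ℝ) + 1) + t) ^ 2 : ℝ) : ℂ)) *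
          Norm.norm (lam - (((2 * Real.pi * ((n : ℝ) - (s : ℝ)) + t) ^ 2 : ℝ) : ℂ)))⁻¹
      ≤ ∑ s ∈ Finset.Icc 2 (2*n-1),
          2/((2*(n:ℝ)-1)^2) * ((((s:ℝ)-1)^2)⁻¹ + ((2*(n:ℝ)-(s:ℝ))^2)⁻¹) :=
        Finset.sum_le_sum hterm
    _ = 2/((2*(n:ℝ)-1)^2) * ((∑ s ∈ Finset.Icc 2 (2*n-1), (((s:ℝ)-1)^2)⁻¹)
          + ∑ s ∈ Finset.Icc 2 (2*n-1), ((2*(n:ℝ)-(s:ℝ))^2)⁻¹) := by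
        rw [← Finset.mul_sum, Finset.sum_add_distrib]
    _ ≤ 2/((2*(n:ℝ)-1)^2) * (2 + 2) := by
        apply mul_le_mul_of_nonneg_left _ hC0
        linarith
    _ = 8/((2*(n:ℝ)-1)^2) := by ring
    _ ≤ 8 / (n:ℝ)^2 := by
        apply div_le_div_of_nonneg_left (by norm_num) (by positivity)
        nlinarith
end
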